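/- arXiv:1105.3288 — 5 statements merged into one kernel-verified Lean document; each statement's English description precedes it below -/
import Mathlib

section
/- Identifiability of the directed SBM: let n ≥ 2Q, let (α, π) and (α', π') be SBM parameters with Q classes such that α_q > 0 and α'_q > 0 for every q, and such that the Q coordinates of the vector r = π·α are pairwise distinct (and likewise for r' = π'·α'). If the two parameter pairs induce the same probability distribution on the adjacency matrix X_{[n]} = (X_{i,j})_{1≤i≠j≤n} of the SBM with n vertices, then there exists a permutation σ of {1,…,Q} with α'_q = α_{σ(q)} and π'_{q,l} = π_{σ(q),σ(l)} for all q, l; i.e., the parameters are identifiable up to label switching. -/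
open scoped Classical
open Finset

/-- The probability that the adjacency matrix of the directed binary SBM with `n`
vertices, `Q` classes, class proportions `α` and connectivity matrix `π` equals `x`:
`P(X = x) = Σ_z (Π_i α_{z_i}) Π_{i≠j} π_{z_i,z_j}^{x_{i,j}} (1−π_{z_i,z_j})^{1−x_{i,j}}`. -/
noncomputable def sbmProb (Q n : ℕ) (α : Fin Q → ℝ) (π : Fin Q → Fin Q → ℝ)
    (x : Fin n → Fin n → Bool) : ℝ :=
  ∑ z : Fin n → Fin Q, (∏ i, α (z i)) *
    ∏ i : Fin n, ∏ j : Fin n,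
      if i = j then 1 else (if x i j then π (z i) (z j) else 1 - π (z i) (z j))

set_option maxHeartbeats 1600000

lemma sum_fn_prod {ι κ : Type*} [Fintype ι] [DecidableEq ι] [Fintype κ] (f : ι → κ → ℝ) :
    ∑ z : ι → κ, ∏ i, f i (z i) = ∏ i, ∑ q, f i q := (Fintype.prod_sum f).symm

lemma sum_fn_prod2 {ι κ μ : Type*} [Fintype ι] [DecidableEq ι] [Fintype κ] [DecidableEq κ]
    [Fintype μ] (g : ι → κ → μ → ℝ) :
    ∑ x : ι → κ → μ, ∏ i, ∏ j, g i j (x i j) = ∏ i, ∏ j, ∑ b, g i j b := by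
  have h1 := Fintype.prod_sum (fun (i : ι) (w : κ → μ) => ∏ j, g i j (w j))
  rw [← h1]
  exact Finset.prod_congr rfl fun i _ => (Fintype.prod_sum (fun j b => g i j b)).symm

lemma sbm_expect (Q n : ℕ) (α : Fin Q → ℝ) (π : Fin Q → Fin Q → ℝ)
    (e : Fin n → Fin n → Prop) (he : ∀ i, ¬ e i i) :
    ∑ x : Fin n → Fin n → Bool, sbmProb Q n α π x *
        ∏ i, ∏ j, (if e i j then (if x i j then (1:ℝ) else 0) else 1)
      = 2 ^ n * ∑ z : Fin n → Fin Q, (∏ i, α (z i)) *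
          ∏ i, ∏ j, (if e i j then π (z i) (z j) else 1) := by
  unfold sbmProb
  rw [Finset.mul_sum]
  simp_rw [Finset.sum_mul]
  rw [Finset.sum_comm]
  refine Finset.sum_congr rfl fun z _ => ?_
  have key : ∀ x : Fin n → Fin n → Bool,
      ((∏ i, α (z i)) * ∏ i, ∏ j, (if i = j then (1:ℝ) else
        (if x i j then π (z i) (z j) else 1 - π (z i) (z j)))) *
        ∏ i, ∏ j, (if e i j then (if x i j then (1:ℝ) else 0) else 1)
      = (∏ i, α (z i)) * ∏ i, ∏ j,
          ((if i = j then (1:ℝ) else (if x i j then π (z i) (z j) else 1 - π (z i) (z j))) *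
            (if e i j then (if x i j then (1:ℝ) else 0) else 1)) := by
    intro x
    rw [mul_assoc]
    congr 1
    rw [← Finset.prod_mul_distrib]
    exact Finset.prod_congr rfl fun i _ => (Finset.prod_mul_distrib).symm
  simp_rw [key]
  rw [← Finset.mul_sum]
  have step := sum_fn_prod2 (fun (i j : Fin n) (b : Bool) =>
      (if i = j then (1:ℝ) else (if b then π (z i) (z j) else 1 - π (z i) (z j))) *
        (if e i j then (if b then (1:ℝ) else 0) else 1))
  rw [step]
  have step3 : ∀ i j : Fin n, (∑ b : Bool,
      ((if i = j then (1:ℝ) else (if b then π (z i) (z j) else 1 - π (z i) (z j))) *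
        (if e i j then (if b then (1:ℝ) else 0) else 1)))
      = (if i = j then 2 else 1) * (if e i j then π (z i) (z j) else 1) := by
    intro i j
    by_cases hij : i = j
    · subst hij
      simp [he i]
    · by_cases hee : e i j <;> simp [hij, hee] <;> ring
  simp_rw [step3]
  have step4 : ∀ i : Fin n, ∏ j, ((if i = j then (2:ℝ) else 1) * (if e i j then π (z i) (z j) else 1))
      = (∏ j, (if i = j then (2:ℝ) else 1)) * ∏ j, (if e i j then π (z i) (z j) else 1) :=
    fun i => Finset.prod_mul_distrib
  simp_rw [step4]
  rw [Finset.prod_mul_distrib]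
  have step5 : ∏ i : Fin n, ∏ j, (if i = j then (2:ℝ) else 1) = 2 ^ n := by
    have h2 : ∀ i : Fin n, ∏ j, (if i = j then (2:ℝ) else 1) = 2 := by intro i; simp
    simp_rw [h2]
    simp
  rw [step5]
  ring



lemma star_value (Q n : ℕ) (α : Fin Q → ℝ) (π : Fin Q → Fin Q → ℝ)
    (hαsum : ∑ q, α q = 1) (i0 : Fin n) (T : Finset (Fin n)) (hT : i0 ∉ T)
    (e : Fin n → Fin n → Prop) (hiff : ∀ i j, e i j ↔ (i = i0 ∧ j ∈ T)) :
    ∑ z : Fin n → Fin Q, (∏ i, α (z i)) *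
        ∏ i, ∏ j, (if e i j then π (z i) (z j) else 1)
      = ∑ q, α q * (∑ l, π q l * α l) ^ T.card := by
  have hconv : ∀ (z : Fin n → Fin Q) (i j : Fin n),
      (if e i j then π (z i) (z j) else 1) = (if (i = i0 ∧ j ∈ T) then π (z i) (z j) else 1) := by
    intro z i j
    by_cases h : e i j
    · rw [if_pos h, if_pos ((hiff i j).mp h)]
    · rw [if_neg h, if_neg (fun hh => h ((hiff i j).mpr hh))]
  simp_rw [hconv]
  have step1 : ∀ z : Fin n → Fin Q,
      (∏ i, α (z i)) * ∏ i, ∏ j, (if (i = i0 ∧ j ∈ T) then π (z i) (z j) else 1)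
      = ∑ q, ∏ i, ((if i = i0 ∧ z i ≠ q then (0:ℝ) else 1) *
          (α (z i) * (if i ∈ T then π q (z i) else 1))) := by
    intro z
    rw [Fintype.sum_eq_single (z i0) ?h0]
    · have h1 : ∀ i : Fin n, ((if i = i0 ∧ z i ≠ z i0 then (0:ℝ) else 1) *
          (α (z i) * (if i ∈ T then π (z i0) (z i) else 1)))
          = α (z i) * (if i ∈ T then π (z i0) (z i) else 1) := by
        intro i
        by_cases hi : i = i0
        · subst hi; simp
        · simp [hi]
      simp_rw [h1]
      rw [Finset.prod_mul_distrib]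
      congr 1
      rw [Fintype.prod_eq_single i0 ?h2]
      · simp
      · intro i hi
        simp [hi]
    case h0 =>
      intro q hq
      apply Finset.prod_eq_zero (Finset.mem_univ i0)
      simp [Ne.symm hq]
  simp_rw [step1]
  rw [Finset.sum_comm]
  refine Finset.sum_congr rfl fun q _ => ?_
  have step2 := sum_fn_prod (fun (i : Fin n) (c : Fin Q) =>
      (if i = i0 ∧ c ≠ q then (0:ℝ) else 1) * (α c * (if i ∈ T then π q c else 1)))
  rw [step2]
  have step3 : ∀ i : Fin n, (∑ c, (if i = i0 ∧ c ≠ q then (0:ℝ) else 1) *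
      (α c * (if i ∈ T then π q c else 1)))
      = (if i = i0 then α q else 1) * (if i ∈ T then (∑ l, π q l * α l) else 1) := by
    intro i
    by_cases hi : i = i0
    · subst hi
      simp only [hT, if_false, if_pos rfl, mul_one, true_and]
      rw [Fintype.sum_eq_single q]
      · simp
      · intro c hc; simp [hc]
    · by_cases hiT : i ∈ T
      · simp only [hi, false_and, if_false, one_mul, if_neg hi, if_pos hiT]
        exact Finset.sum_congr rfl fun l _ => mul_comm _ _
      · simp [hi, hiT, hαsum]
  simp_rw [step3]
  rw [Finset.prod_mul_distrib, Fintype.prod_ite_eq' i0 (fun _ => α q), Fintype.prod_ite_mem,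
    Finset.prod_const]



lemma dstar_value (Q n : ℕ) (α : Fin Q → ℝ) (π : Fin Q → Fin Q → ℝ)
    (hαsum : ∑ q, α q = 1) (i0 i1 : Fin n) (h01 : i0 ≠ i1)
    (A B : Finset (Fin n)) (hA0 : i0 ∉ A) (hA1 : i1 ∉ A) (hB0 : i0 ∉ B) (hB1 : i1 ∉ B)
    (hAB : Disjoint A B)
    (e : Fin n → Fin n → Prop)
    (hiff : ∀ i j, e i j ↔ ((i = i0 ∧ j = i1) ∨ (i = i0 ∧ j ∈ A) ∨ (i = i1 ∧ j ∈ B))) :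
    ∑ z : Fin n → Fin Q, (∏ i, α (z i)) *
        ∏ i, ∏ j, (if e i j then π (z i) (z j) else 1)
      = ∑ q, ∑ l, (α q * α l * π q l) *
          ((∑ c, π q c * α c) ^ A.card * (∑ c, π l c * α c) ^ B.card) := by
  have hconv : ∀ (z : Fin n → Fin Q) (i j : Fin n),
      (if e i j then π (z i) (z j) else 1)
        = (if ((i = i0 ∧ j = i1) ∨ (i = i0 ∧ j ∈ A) ∨ (i = i1 ∧ j ∈ B))
            then π (z i) (z j) else 1) := by
    intro z i j
    by_cases h : e i j
    · rw [if_pos h, if_pos ((hiff i j).mp h)]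
    · rw [if_neg h, if_neg (fun hh => h ((hiff i j).mpr hh))]
  simp_rw [hconv]
  have hd : ∀ a ∈ A, a ∉ B := fun a ha hb => (Finset.disjoint_left.mp hAB) ha hb
  have step1 : ∀ z : Fin n → Fin Q,
      (∏ i, α (z i)) * ∏ i, ∏ j, (if ((i = i0 ∧ j = i1) ∨ (i = i0 ∧ j ∈ A) ∨ (i = i1 ∧ j ∈ B))
          then π (z i) (z j) else 1)
      = ∑ q, ∑ l, π q l * ∏ i, ((if i = i0 ∧ z i ≠ q then (0:ℝ) else 1) *
          ((if i = i1 ∧ z i ≠ l then (0:ℝ) else 1) *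
           (α (z i) * ((if i ∈ A then π q (z i) else 1) * (if i ∈ B then π l (z i) else 1))))) := by
    intro z
    rw [Fintype.sum_eq_single (z i0) ?h0]
    case h0 =>
      intro q hq
      apply Finset.sum_eq_zero
      intro l _
      rw [Finset.prod_eq_zero (Finset.mem_univ i0) (by simp [Ne.symm hq]), mul_zero]
    rw [Fintype.sum_eq_single (z i1) ?h1]
    case h1 =>
      intro l hl
      rw [Finset.prod_eq_zero (Finset.mem_univ i1) (by simp [Ne.symm hl]), mul_zero]
    have hg : ∀ i : Fin n, ((if i = i0 ∧ z i ≠ z i0 then (0:ℝ) else 1) *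
        ((if i = i1 ∧ z i ≠ z i1 then (0:ℝ) else 1) *
         (α (z i) * ((if i ∈ A then π (z i0) (z i) else 1) * (if i ∈ B then π (z i1) (z i) else 1)))))
        = α (z i) * ((if i ∈ A then π (z i0) (z i) else 1) * (if i ∈ B then π (z i1) (z i) else 1)) := by
      intro i
      have c0 : ¬ (i = i0 ∧ z i ≠ z i0) := fun ⟨h, h'⟩ => h' (by rw [h])
      have c1 : ¬ (i = i1 ∧ z i ≠ z i1) := fun ⟨h, h'⟩ => h' (by rw [h])
      rw [if_neg c0, if_neg c1, one_mul, one_mul]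
    simp_rw [hg]
    rw [Finset.prod_mul_distrib, Finset.prod_mul_distrib]
    have hsplit : ∀ i : Fin n, (∏ j, (if ((i = i0 ∧ j = i1) ∨ (i = i0 ∧ j ∈ A) ∨ (i = i1 ∧ j ∈ B))
          then π (z i) (z j) else 1))
        = (if i = i0 then π (z i0) (z i1) * ∏ j, (if j ∈ A then π (z i0) (z j) else 1) else 1) *
          (if i = i1 then ∏ j, (if j ∈ B then π (z i1) (z j) else 1) else 1) := by
      intro i
      by_cases h0 : i = i0
      · have hii1 : i ≠ i1 := by rw [h0]; exact h01
        have key : ∀ j : Fin n, (if ((i = i0 ∧ j = i1) ∨ (i = i0 ∧ j ∈ A) ∨ (i = i1 ∧ j ∈ B))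
              then π (z i) (z j) else 1)
            = (if j = i1 then π (z i) (z j) else 1) * (if j ∈ A then π (z i) (z j) else 1) := by
          intro j
          by_cases hj1 : j = i1 <;> by_cases hjA : j ∈ A
          · exact absurd (hj1 ▸ hjA) hA1
          · simp [h0, hj1, hjA, hii1, hA1, h01]
          · simp [h0, hj1, hjA, hd j hjA, hii1, h01]
          · simp [h0, hj1, hjA, hii1, h01]
        simp_rw [key]
        rw [Finset.prod_mul_distrib, Fintype.prod_ite_eq' i1 (fun j => π (z i) (z j))]
        rw [if_pos h0, if_neg hii1, mul_one, h0]
      · by_cases h1 : i = i1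
        · have key : ∀ j : Fin n, (if ((i = i0 ∧ j = i1) ∨ (i = i0 ∧ j ∈ A) ∨ (i = i1 ∧ j ∈ B))
                then π (z i) (z j) else 1)
              = (if j ∈ B then π (z i) (z j) else 1) := by
            intro j; simp [h0, h1, Ne.symm h01]
          simp_rw [key]
          rw [if_neg h0, if_pos h1, one_mul, h1]
        · have key : ∀ j : Fin n, (if ((i = i0 ∧ j = i1) ∨ (i = i0 ∧ j ∈ A) ∨ (i = i1 ∧ j ∈ B))
                then π (z i) (z j) else 1) = 1 := by
            intro j; simp [h0, h1]
          simp_rw [key]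
          rw [if_neg h0, if_neg h1, one_mul]
          exact Finset.prod_const_one
    simp_rw [hsplit]
    rw [Finset.prod_mul_distrib, Fintype.prod_ite_eq' i0
        (fun _ => π (z i0) (z i1) * ∏ j, (if j ∈ A then π (z i0) (z j) else 1)),
      Fintype.prod_ite_eq' i1 (fun _ => ∏ j, (if j ∈ B then π (z i1) (z j) else 1))]
    ring
  simp_rw [step1]
  rw [Finset.sum_comm]
  refine Finset.sum_congr rfl fun q _ => ?_
  rw [Finset.sum_comm]
  refine Finset.sum_congr rfl fun l _ => ?_
  rw [← Finset.mul_sum]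
  have step2 := sum_fn_prod (fun (i : Fin n) (c : Fin Q) =>
      (if i = i0 ∧ c ≠ q then (0:ℝ) else 1) * ((if i = i1 ∧ c ≠ l then (0:ℝ) else 1) *
        (α c * ((if i ∈ A then π q c else 1) * (if i ∈ B then π l c else 1)))))
  rw [step2]
  have step3 : ∀ i : Fin n, (∑ c, (if i = i0 ∧ c ≠ q then (0:ℝ) else 1) *
      ((if i = i1 ∧ c ≠ l then (0:ℝ) else 1) *
        (α c * ((if i ∈ A then π q c else 1) * (if i ∈ B then π l c else 1)))))
      = (if i = i0 then α q else 1) * ((if i = i1 then α l else 1) *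
          ((if i ∈ A then (∑ c, π q c * α c) else 1) * (if i ∈ B then (∑ c, π l c * α c) else 1))) := by
    intro i
    by_cases h0 : i = i0
    · subst h0
      simp only [hA0, hB0, if_false, if_pos rfl, true_and, mul_one, h01, if_neg h01]
      rw [Fintype.sum_eq_single q]
      · simp [h01]
      · intro c hc; simp [hc]
    · by_cases h1 : i = i1
      · subst h1
        simp only [hA1, hB1, if_false, if_pos rfl, true_and, mul_one, h0, if_neg h0, one_mul]
        rw [Fintype.sum_eq_single l]
        · simp [Ne.symm h01]
        · intro c hc; simp [hc, h0]
      · by_cases hA : i ∈ A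
        · have hB : i ∉ B := hd i hA
          simp only [h0, h1, hA, hB, false_and, if_false, if_true, one_mul, mul_one, if_neg h0,
            if_neg h1, if_pos hA]
          exact Finset.sum_congr rfl fun c _ => by ring
        · by_cases hB : i ∈ B
          · simp only [h0, h1, hA, hB, false_and, if_false, if_true, one_mul, mul_one, if_neg h0,
              if_neg h1, if_neg hA, if_pos hB]
            exact Finset.sum_congr rfl fun c _ => by ring
          · simp [h0, h1, hA, hB, hαsum]
  simp_rw [step3]
  rw [Finset.prod_mul_distrib]
  simp_rw [Finset.prod_mul_distrib]
  rw [Fintype.prod_ite_eq' i0 (fun _ => α q), Fintype.prod_ite_eq' i1 (fun _ => α l),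
    Fintype.prod_ite_mem, Fintype.prod_ite_mem, Finset.prod_const, Finset.prod_const]
  ring

section PolyPart
open Polynomial

lemma poly_moment_sum (Q N : ℕ) (β ρ : Fin Q → ℝ) (p : Polynomial ℝ) (hp : p.natDegree < N) :
    ∑ q, β q * p.eval (ρ q) = ∑ i ∈ Finset.range N, p.coeff i * ∑ q, β q * ρ q ^ i := by
  have h : ∀ q, β q * p.eval (ρ q) = ∑ i ∈ Finset.range N, β q * (p.coeff i * ρ q ^ i) := by
    intro q
    rw [Polynomial.eval_eq_sum_range' hp, Finset.mul_sum]
  simp_rw [h]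
  rw [Finset.sum_comm]
  refine Finset.sum_congr rfl fun i _ => ?_
  rw [Finset.mul_sum]
  exact Finset.sum_congr rfl fun q _ => by ring

lemma moment_perm (Q : ℕ) (hQ : 0 < Q) (α α' r r' : Fin Q → ℝ)
    (hα : ∀ q, 0 < α q) (hα' : ∀ q, 0 < α' q)
    (hr : Function.Injective r) (hr' : Function.Injective r')
    (hm : ∀ k < 2*Q, ∑ q, α q * r q ^ k = ∑ q, α' q * r' q ^ k) :
    ∃ σ : Equiv.Perm (Fin Q), (∀ q, α' q = α (σ q)) ∧ ∀ q, r' q = r (σ q) := by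
  have hpoly : ∀ p : Polynomial ℝ, p.natDegree < 2*Q →
      ∑ q, α q * p.eval (r q) = ∑ q, α' q * p.eval (r' q) := by
    intro p hp
    rw [poly_moment_sum Q (2*Q) α r p hp, poly_moment_sum Q (2*Q) α' r' p hp]
    exact Finset.sum_congr rfl fun i hi => by
      rw [hm i (Finset.mem_range.mp hi)]
  set P : Polynomial ℝ := ∏ q, (X - C (r q)) with hP
  have hPdeg : P.natDegree = Q := by
    rw [hP, Polynomial.natDegree_prod _ _ (fun q _ => Polynomial.X_sub_C_ne_zero (r q))]
    simp [Polynomial.natDegree_X_sub_C]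
  have hPeval : ∀ x : ℝ, P.eval x = ∏ q, (x - r q) := by
    intro x; rw [hP, Polynomial.eval_prod]; simp
  have hrange : ∀ q0, ∃ q1, r' q0 = r q1 := by
    intro q0
    set L := Lagrange.basis Finset.univ r' q0 with hL
    have hLdeg : L.natDegree = Q - 1 := by
      rw [hL, Lagrange.natDegree_basis (hr'.injOn) (Finset.mem_univ q0)]
      simp
    have hfdeg : (P * L).natDegree < 2 * Q := by
      calc (P * L).natDegree ≤ P.natDegree + L.natDegree := Polynomial.natDegree_mul_le
        _ = Q + (Q - 1) := by rw [hPdeg, hLdeg]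
        _ < 2 * Q := by omega
    have h0 := hpoly (P * L) hfdeg
    have hLHS : ∑ q, α q * (P * L).eval (r q) = 0 := by
      apply Finset.sum_eq_zero
      intro q _
      rw [Polynomial.eval_mul, hPeval]
      rw [Finset.prod_eq_zero (Finset.mem_univ q) (by ring)]
      ring
    have hRHS : ∑ q, α' q * (P * L).eval (r' q) = α' q0 * P.eval (r' q0) := by
      rw [Fintype.sum_eq_single q0]
      · rw [Polynomial.eval_mul, hL, Lagrange.eval_basis_self (hr'.injOn) (Finset.mem_univ q0)]
        ring
      · intro q hq
        rw [Polynomial.eval_mul, hL, Lagrange.eval_basis_of_ne (Ne.symm hq) (Finset.mem_univ q)]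
        ring
    rw [hLHS, hRHS] at h0
    have hP0 : P.eval (r' q0) = 0 := by
      rcases mul_eq_zero.mp h0.symm with h | h
      · exact absurd h (ne_of_gt (hα' q0))
      · exact h
    rw [hPeval] at hP0
    rcases Finset.prod_eq_zero_iff.mp hP0 with ⟨q1, _, hq1⟩
    exact ⟨q1, by linarith [sub_eq_zero.mp hq1]⟩
  choose τ hτ using hrange
  have hτinj : Function.Injective τ := by
    intro a b hab
    apply hr'
    rw [hτ a, hτ b, hab]
  have hτbij : Function.Bijective τ := Finite.injective_iff_bijective.mp hτinj
  refine ⟨Equiv.ofBijective τ hτbij, ?_, fun q => hτ q⟩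
  intro q0
  set L := Lagrange.basis Finset.univ r (τ q0) with hL
  have hLdeg : L.natDegree < 2*Q := by
    rw [hL, Lagrange.natDegree_basis (hr.injOn) (Finset.mem_univ _)]
    simp; omega
  have h0 := hpoly L hLdeg
  have hLHS : ∑ q, α q * L.eval (r q) = α (τ q0) := by
    rw [Fintype.sum_eq_single (τ q0)]
    · rw [hL, Lagrange.eval_basis_self (hr.injOn) (Finset.mem_univ _)]; ring
    · intro q hq
      rw [hL, Lagrange.eval_basis_of_ne (Ne.symm hq) (Finset.mem_univ q)]; ring
  have hRHS : ∑ q, α' q * L.eval (r' q) = α' q0 := by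
    rw [Fintype.sum_eq_single q0]
    · rw [hτ q0, hL, Lagrange.eval_basis_self (hr.injOn) (Finset.mem_univ _)]; ring
    · intro q hq
      rw [hτ q, hL, Lagrange.eval_basis_of_ne (i := τ q0) (j := τ q)
        (fun h => hq (hτinj h.symm)) (Finset.mem_univ _)]
      ring
  rw [hLHS, hRHS] at h0
  exact h0.symm

lemma pi_recover (Q : ℕ) (hQ : 0 < Q) (α r : Fin Q → ℝ)
    (hα : ∀ q, 0 < α q) (hr : Function.Injective r) (Bm : Fin Q → Fin Q → ℝ)
    (h : ∀ a < Q, ∀ b < Q,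
      ∑ q, ∑ l, (α q * α l * Bm q l) * (r q ^ a * r l ^ b) = 0) :
    ∀ q l, Bm q l = 0 := by
  have hbil : ∀ p1 p2 : Polynomial ℝ, p1.natDegree < Q → p2.natDegree < Q →
      ∑ q, ∑ l, (α q * α l * Bm q l) * (p1.eval (r q) * p2.eval (r l)) = 0 := by
    intro p1 p2 h1 h2
    have inner : ∀ q, ∑ l, (α q * α l * Bm q l) * (p1.eval (r q) * p2.eval (r l))
        = p1.eval (r q) * ∑ b ∈ Finset.range Q, p2.coeff b *
            ∑ l, (α q * α l * Bm q l) * r l ^ b := by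
      intro q
      rw [← poly_moment_sum Q Q (fun l => α q * α l * Bm q l) r p2 h2, Finset.mul_sum]
      exact Finset.sum_congr rfl fun l _ => by ring
    simp_rw [inner]
    have outer : ∀ b, ∑ q, p1.eval (r q) * (p2.coeff b * ∑ l, (α q * α l * Bm q l) * r l ^ b)
        = p2.coeff b * ∑ a ∈ Finset.range Q, p1.coeff a *
            ∑ q, (∑ l, (α q * α l * Bm q l) * r l ^ b) * r q ^ a := by
      intro b
      rw [← poly_moment_sum Q Q (fun q => ∑ l, (α q * α l * Bm q l) * r l ^ b) r p1 h1,
        Finset.mul_sum]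
      exact Finset.sum_congr rfl fun q _ => by ring
    rw [show ∑ q, p1.eval (r q) * ∑ b ∈ Finset.range Q, p2.coeff b *
          ∑ l, (α q * α l * Bm q l) * r l ^ b
        = ∑ b ∈ Finset.range Q, ∑ q, p1.eval (r q) *
            (p2.coeff b * ∑ l, (α q * α l * Bm q l) * r l ^ b) by
      rw [Finset.sum_comm]
      exact Finset.sum_congr rfl fun q _ => Finset.mul_sum _ _ _]
    simp_rw [outer]
    have hS : ∀ a < Q, ∀ b < Q,
        ∑ q, (∑ l, (α q * α l * Bm q l) * r l ^ b) * r q ^ a = 0 := by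
      intro a ha b hb
      rw [← h a ha b hb]
      refine Finset.sum_congr rfl fun q _ => ?_
      rw [Finset.sum_mul]
      exact Finset.sum_congr rfl fun l _ => by ring
    apply Finset.sum_eq_zero
    intro b hb
    have hin : ∑ a ∈ Finset.range Q, p1.coeff a *
        ∑ q, (∑ l, (α q * α l * Bm q l) * r l ^ b) * r q ^ a = 0 := by
      apply Finset.sum_eq_zero
      intro a ha
      rw [hS a (Finset.mem_range.mp ha) b (Finset.mem_range.mp hb), mul_zero]
    rw [hin, mul_zero]
  intro q0 l0
  have hdeg : ∀ i : Fin Q, (Lagrange.basis Finset.univ r i).natDegree < Q := by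
    intro i
    rw [Lagrange.natDegree_basis (hr.injOn) (Finset.mem_univ i)]
    simp; omega
  have h1 := hbil (Lagrange.basis Finset.univ r q0) (Lagrange.basis Finset.univ r l0)
    (hdeg q0) (hdeg l0)
  rw [Fintype.sum_eq_single q0 ?hq0] at h1
  case hq0 =>
    intro q hq
    apply Finset.sum_eq_zero
    intro l _
    rw [Lagrange.eval_basis_of_ne (i := q0) (j := q) (Ne.symm hq) (Finset.mem_univ q)]
    ring
  rw [Fintype.sum_eq_single l0 ?hl0] at h1
  case hl0 =>
    intro l hl
    rw [Lagrange.eval_basis_of_ne (i := l0) (j := l) (Ne.symm hl) (Finset.mem_univ l)]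
    ring
  rw [Lagrange.eval_basis_self (hr.injOn) (Finset.mem_univ q0),
    Lagrange.eval_basis_self (hr.injOn) (Finset.mem_univ l0)] at h1
  have h2 : α q0 * α l0 * Bm q0 l0 = 0 := by linarith [h1]
  rcases mul_eq_zero.mp h2 with h3 | h3
  · rcases mul_eq_zero.mp h3 with h4 | h4
    · exact absurd h4 (ne_of_gt (hα q0))
    · exact absurd h4 (ne_of_gt (hα l0))
  · exact h3

end PolyPart



/-- Identifiability of the directed SBM (up to label switching) when `n ≥ 2Q`,
all group proportions are positive and the coordinates of `r = π·α` are pairwise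
distinct (and likewise for the second parameter pair). -/
theorem sbm_identifiable
    (Q n : ℕ) (hQ : 0 < Q) (hn : 2 * Q ≤ n)
    (α α' : Fin Q → ℝ) (π π' : Fin Q → Fin Q → ℝ)
    (hα : ∀ q, 0 < α q) (hαsum : ∑ q, α q = 1)
    (hα' : ∀ q, 0 < α' q) (hα'sum : ∑ q, α' q = 1)
    (hπ : ∀ q l, π q l ∈ Set.Icc (0:ℝ) 1) (hπ' : ∀ q l, π' q l ∈ Set.Icc (0:ℝ) 1)
    (hr : Function.Injective fun q => ∑ l, π q l * α l)
    (hr' : Function.Injective fun q => ∑ l, π' q l * α' l)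
    (heq : ∀ x : Fin n → Fin n → Bool, sbmProb Q n α π x = sbmProb Q n α' π' x) :
    ∃ σ : Equiv.Perm (Fin Q), (∀ q, α' q = α (σ q)) ∧ ∀ q l, π' q l = π (σ q) (σ l) := by
  have hn2 : 2 ≤ n := le_trans (by omega) hn
  set r : Fin Q → ℝ := fun q => ∑ l, π q l * α l with hrdef
  set r' : Fin Q → ℝ := fun q => ∑ l, π' q l * α' l with hr'def
  -- W equality for any nondiagonal edge predicate
  have hW : ∀ e : Fin n → Fin n → Prop, (∀ i, ¬ e i i) →
      (∑ z : Fin n → Fin Q, (∏ i, α (z i)) *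
          ∏ i, ∏ j, (if e i j then π (z i) (z j) else 1))
      = ∑ z : Fin n → Fin Q, (∏ i, α' (z i)) *
          ∏ i, ∏ j, (if e i j then π' (z i) (z j) else 1) := by
    intro e he
    have h1 := sbm_expect Q n α π e he
    have h2 := sbm_expect Q n α' π' e he
    have h3 : ∑ x : Fin n → Fin n → Bool, sbmProb Q n α π x *
        ∏ i, ∏ j, (if e i j then (if x i j then (1:ℝ) else 0) else 1)
        = ∑ x : Fin n → Fin n → Bool, sbmProb Q n α' π' x *
        ∏ i, ∏ j, (if e i j then (if x i j then (1:ℝ) else 0) else 1) :=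
      Finset.sum_congr rfl fun x _ => by rw [heq x]
    rw [h1, h2] at h3
    exact mul_left_cancel₀ (pow_ne_zero n two_ne_zero) h3
  -- vertices 0 and 1
  set i0 : Fin n := ⟨0, by omega⟩ with hi0
  set i1 : Fin n := ⟨1, by omega⟩ with hi1
  have h01 : i0 ≠ i1 := by simp [hi0, hi1, Fin.ext_iff]
  -- star moments
  have hmom : ∀ k < 2*Q, ∑ q, α q * r q ^ k = ∑ q, α' q * r' q ^ k := by
    intro k hk
    have hcard : k ≤ (Finset.univ.erase i0 : Finset (Fin n)).card := by
      rw [Finset.card_erase_of_mem (Finset.mem_univ i0), Finset.card_univ, Fintype.card_fin]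
      omega
    obtain ⟨T, hTsub, hTcard⟩ := Finset.exists_subset_card_eq hcard
    have hT0 : i0 ∉ T := fun h => (Finset.mem_erase.mp (hTsub h)).1 rfl
    have he : ∀ i : Fin n, ¬ (i = i0 ∧ i ∈ T) := fun i ⟨h1, h2⟩ => hT0 (h1 ▸ h2)
    have := hW (fun i j => i = i0 ∧ j ∈ T) he
    rw [star_value Q n α π hαsum i0 T hT0 _ (fun i j => Iff.rfl),
      star_value Q n α' π' hα'sum i0 T hT0 _ (fun i j => Iff.rfl)] at this
    rw [← hTcard]
    exact this
  obtain ⟨σ, hσα, hσr⟩ := moment_perm Q hQ α α' r r' hα hα' hr hr' hmom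
  -- double-star moments
  have hM : ∀ a < Q, ∀ b < Q,
      ∑ q, ∑ l, (α q * α l * π q l) * (r q ^ a * r l ^ b)
      = ∑ q, ∑ l, (α' q * α' l * π' q l) * (r' q ^ a * r' l ^ b) := by
    intro a ha b hb
    have hcard1 : a ≤ ((Finset.univ.erase i0).erase i1 : Finset (Fin n)).card := by
      rw [Finset.card_erase_of_mem (Finset.mem_erase.mpr ⟨Ne.symm h01, Finset.mem_univ i1⟩),
        Finset.card_erase_of_mem (Finset.mem_univ i0), Finset.card_univ, Fintype.card_fin]
      omega
    obtain ⟨A, hAsub, hAcard⟩ := Finset.exists_subset_card_eq hcard1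
    have hcard2 : b ≤ (((Finset.univ.erase i0).erase i1 \ A : Finset (Fin n))).card := by
      have h1 : (((Finset.univ.erase i0).erase i1 \ A : Finset (Fin n))).card
          = ((Finset.univ.erase i0).erase i1 : Finset (Fin n)).card - A.card :=
        Finset.card_sdiff_of_subset hAsub
      rw [h1, hAcard, Finset.card_erase_of_mem (Finset.mem_erase.mpr ⟨Ne.symm h01, Finset.mem_univ i1⟩),
        Finset.card_erase_of_mem (Finset.mem_univ i0), Finset.card_univ, Fintype.card_fin]
      omega
    obtain ⟨B, hBsub, hBcard⟩ := Finset.exists_subset_card_eq hcard2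
    have hA0 : i0 ∉ A := fun h => (Finset.mem_erase.mp (Finset.mem_erase.mp (hAsub h)).2).1 rfl
    have hA1 : i1 ∉ A := fun h => (Finset.mem_erase.mp (hAsub h)).1 rfl
    have hB0 : i0 ∉ B := fun h => (Finset.mem_erase.mp (Finset.mem_erase.mp
      ((Finset.mem_sdiff.mp (hBsub h)).1)).2).1 rfl
    have hB1 : i1 ∉ B := fun h => (Finset.mem_erase.mp (Finset.mem_sdiff.mp (hBsub h)).1).1 rfl
    have hAB : Disjoint A B := Finset.disjoint_left.mpr
      (fun x hx hxB => (Finset.mem_sdiff.mp (hBsub hxB)).2 hx)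
    have he : ∀ i : Fin n, ¬ ((i = i0 ∧ i = i1) ∨ (i = i0 ∧ i ∈ A) ∨ (i = i1 ∧ i ∈ B)) := by
      rintro i (⟨h1, h2⟩ | ⟨h1, h2⟩ | ⟨h1, h2⟩)
      · exact h01 (h1 ▸ h2 ▸ rfl)
      · exact hA0 (h1 ▸ h2)
      · exact hB1 (h1 ▸ h2)
    have := hW (fun i j => (i = i0 ∧ j = i1) ∨ (i = i0 ∧ j ∈ A) ∨ (i = i1 ∧ j ∈ B)) he
    have hd1 := dstar_value Q n α π hαsum i0 i1 h01 A B hA0 hA1 hB0 hB1 hAB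
      (fun i j => (i = i0 ∧ j = i1) ∨ (i = i0 ∧ j ∈ A) ∨ (i = i1 ∧ j ∈ B)) (fun i j => Iff.rfl)
    have hd2 := dstar_value Q n α' π' hα'sum i0 i1 h01 A B hA0 hA1 hB0 hB1 hAB
      (fun i j => (i = i0 ∧ j = i1) ∨ (i = i0 ∧ j ∈ A) ∨ (i = i1 ∧ j ∈ B)) (fun i j => Iff.rfl)
    rw [hd1, hd2] at this
    rw [← hAcard, ← hBcard]
    exact this
  -- reindex the primed double-star moments
  have hreindex : ∀ a b : ℕ,
      ∑ q, ∑ l, (α' q * α' l * π' q l) * (r' q ^ a * r' l ^ b)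
      = ∑ q, ∑ l, (α q * α l * π' (σ.symm q) (σ.symm l)) * (r q ^ a * r l ^ b) := by
    intro a b
    rw [← Equiv.sum_comp σ (fun q => ∑ l, (α q * α l * π' (σ.symm q) (σ.symm l)) *
      (r q ^ a * r l ^ b))]
    refine Finset.sum_congr rfl fun q _ => ?_
    rw [← Equiv.sum_comp σ (fun l => (α (σ q) * α l * π' (σ.symm (σ q)) (σ.symm l)) *
      (r (σ q) ^ a * r l ^ b))]
    refine Finset.sum_congr rfl fun l _ => ?_
    rw [Equiv.symm_apply_apply, Equiv.symm_apply_apply, hσα q, hσα l, hσr q, hσr l]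
  -- recover π
  have hBm : ∀ q l, π q l - π' (σ.symm q) (σ.symm l) = 0 := by
    apply pi_recover Q hQ α r hα hr
    intro a ha b hb
    have h1 := hM a ha b hb
    rw [hreindex a b] at h1
    have : ∀ q l : Fin Q, (α q * α l * (π q l - π' (σ.symm q) (σ.symm l))) * (r q ^ a * r l ^ b)
        = (α q * α l * π q l) * (r q ^ a * r l ^ b)
          - (α q * α l * π' (σ.symm q) (σ.symm l)) * (r q ^ a * r l ^ b) := by
      intro q l; ring
    simp_rw [this, Finset.sum_sub_distrib]
    rw [h1]
    ring
  refine ⟨σ, hσα, fun q l => ?_⟩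
  have := hBm (σ q) (σ l)
  rw [Equiv.symm_apply_apply, Equiv.symm_apply_apply] at this
  linarith
end

section
/- Uniform convergence of the normalized conditional log-likelihood: assume (A1) and (A2) hold for π*, and condition on the true labels Z = z*. Define φ_n(z_{[n]}, π) = (n(n−1))^{−1} L1(X_{[n]}; z_{[n]}, π) and Φ_n(z_{[n]}, π) = E[φ_n(z_{[n]}, π) | Z_{[n]} = z*_{[n]}], and let 𝒫 be the set of pairs (z_{[n]}, π) such that π satisfies (A1) and (A2) and Φ_n(z_{[n]}, π) is finite (equivalently, whenever π_{z_i,z_j} ∈ {0,1} then π*_{z*_i,z*_j} = π_{z_i,z_j}). Then sup_{(z_{[n]},π) ∈ 𝒫} |φ_n(z_{[n]}, π) − Φ_n(z_{[n]}, π)| → 0 in probability as n → ∞, uniformly with respect to z*. -/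
open scoped Classical
open Finset Filter MeasureTheory

/-- Product of Bernoulli masses: the conditional probability `P(X = x | Z = z)` in the
directed binary SBM (diagonal terms are ignored). -/
noncomputable def bernW {Q n : ℕ} (π : Fin Q → Fin Q → ℝ) (z : Fin n → Fin Q)
    (x : Fin n → Fin n → Bool) : ℝ :=
  ∏ i : Fin n, ∏ j : Fin n,
    if i = j then 1 else (if x i j then π (z i) (z j) else 1 - π (z i) (z j))

/-- Unnormalized posterior weight of the label vector `z` given the adjacency matrix `x`:
`(Π_i α_{z_i}) · Π_{i≠j} π_{z_i,z_j}^{x_{i,j}}(1−π_{z_i,z_j})^{1−x_{i,j}}`; this is also the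
joint SBM probability `P(Z = z, X = x)`. -/
noncomputable def postW {Q n : ℕ} (α : Fin Q → ℝ) (π : Fin Q → Fin Q → ℝ)
    (x : Fin n → Fin n → Bool) (z : Fin n → Fin Q) : ℝ :=
  (∏ i : Fin n, α (z i)) * bernW π z x

/-- The conditional law `P* = P(· | Z = z*)` of the adjacency matrix, as a probability
of an event `E`. -/
noncomputable def condProb {Q n : ℕ} (π : Fin Q → Fin Q → ℝ) (zs : Fin n → Fin Q)
    (E : Set (Fin n → Fin n → Bool)) : ℝ :=
  ∑ x : Fin n → Fin n → Bool, if x ∈ E then bernW π zs x else 0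

/-- The unconditional SBM law `ℙ` of the pair (labels, adjacency matrix), as a
probability of an event `E`. -/
noncomputable def jointProb {Q n : ℕ} (α : Fin Q → ℝ) (π : Fin Q → Fin Q → ℝ)
    (E : Set ((Fin n → Fin Q) × (Fin n → Fin n → Bool))) : ℝ :=
  ∑ z : Fin n → Fin Q, ∑ x : Fin n → Fin n → Bool,
    if (z, x) ∈ E then postW α π x z else 0

/-- Assumption (A1): no two distinct classes have simultaneously equal rows and columns. -/
def A1 {Q : ℕ} (π : Fin Q → Fin Q → ℝ) : Prop :=
  ∀ q q' : Fin Q, q ≠ q' → ∃ l, π q l ≠ π q' l ∨ π l q ≠ π l q'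

/-- Assumption (A2): every entry of `π` lying in `(0,1)` lies in `[ζ, 1−ζ]`. -/
def A2 {Q : ℕ} (ζ : ℝ) (π : Fin Q → Fin Q → ℝ) : Prop :=
  ∀ q l, π q l ∈ Set.Ioo (0:ℝ) 1 → π q l ∈ Set.Icc ζ (1 - ζ)

/-- Assumption (A3): all group proportions lie in `[γ, 1−γ]`. -/
def A3 {Q : ℕ} (γ : ℝ) (α : Fin Q → ℝ) : Prop :=
  ∀ q, α q ∈ Set.Icc γ (1 - γ)

/-- `α` is a probability vector. -/
def ProbVec {Q : ℕ} (α : Fin Q → ℝ) : Prop := (∀ q, 0 ≤ α q) ∧ ∑ q, α q = 1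

/-- All entries of `π` lie in `[0,1]`. -/
def MatIcc {Q : ℕ} (π : Fin Q → Fin Q → ℝ) : Prop := ∀ q l, π q l ∈ Set.Icc (0:ℝ) 1

/-- `π`-equivalence of label vectors: equality up to a permutation of the classes
leaving `π` invariant. -/
def piEquiv {Q n : ℕ} (π : Fin Q → Fin Q → ℝ) (z z' : Fin n → Fin Q) : Prop :=
  ∃ σ : Equiv.Perm (Fin Q), (∀ q l, π (σ q) (σ l) = π q l) ∧ ∀ i, z' i = σ (z i)
/-- Conditional log-likelihood `L1(X; z, π)` of the labels `z` and connectivity `π`. -/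
noncomputable def L1 {Q n : ℕ} (x : Fin n → Fin n → Bool) (z : Fin n → Fin Q)
    (π : Fin Q → Fin Q → ℝ) : ℝ :=
  ∑ i : Fin n, ∑ j : Fin n, if i = j then 0 else
    (if x i j then Real.log (π (z i) (z j)) else Real.log (1 - π (z i) (z j)))

/-- Conditional expectation of `L1(X; z, π)` given `Z_{[n]} = z*` (unnormalized):
`Σ_{i≠j} [π*_{z*_i,z*_j} log π_{z_i,z_j} + (1−π*_{z*_i,z*_j}) log(1−π_{z_i,z_j})]`. -/
noncomputable def PhiL1 {Q n : ℕ} (πs : Fin Q → Fin Q → ℝ) (zs : Fin n → Fin Q)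
    (z : Fin n → Fin Q) (π : Fin Q → Fin Q → ℝ) : ℝ :=
  ∑ i : Fin n, ∑ j : Fin n, if i = j then 0 else
    (πs (zs i) (zs j) * Real.log (π (z i) (z j))
      + (1 - πs (zs i) (zs j)) * Real.log (1 - π (z i) (z j)))


namespace SBMAux
lemma exp_convex_bound {u y : ℝ} (h1 : -1 ≤ y) (h2 : y ≤ 1) :
    Real.exp (u * y) ≤ (1 + y) / 2 * Real.exp u + (1 - y) / 2 * Real.exp (-u) := by
  have ha : (0:ℝ) ≤ (1 + y) / 2 := by linarith
  have hb : (0:ℝ) ≤ (1 - y) / 2 := by linarith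
  have hab : (1 + y) / 2 + (1 - y) / 2 = 1 := by ring
  have h := convexOn_exp.2 (Set.mem_univ u) (Set.mem_univ (-u)) ha hb hab
  rw [smul_eq_mul, smul_eq_mul, smul_eq_mul, smul_eq_mul] at h
  have hy : (1 + y) / 2 * u + (1 - y) / 2 * -u = u * y := by ring
  rwa [hy] at h

lemma bern_mgf {p u : ℝ} (h0 : 0 ≤ p) (h1 : p ≤ 1) :
    p * Real.exp (u * (1 - p)) + (1 - p) * Real.exp (u * (0 - p))
      ≤ Real.exp (u ^ 2 / 2) := by
  have hA := exp_convex_bound (u := u) (y := 1 - p) (by linarith) (by linarith)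
  have hB := exp_convex_bound (u := u) (y := 0 - p) (by linarith) (by linarith)
  have e1 : p * Real.exp (u * (1 - p))
      ≤ p * ((1 + (1 - p)) / 2 * Real.exp u + (1 - (1 - p)) / 2 * Real.exp (-u)) :=
    mul_le_mul_of_nonneg_left hA h0
  have e2 : (1 - p) * Real.exp (u * (0 - p))
      ≤ (1 - p) * ((1 + (0 - p)) / 2 * Real.exp u + (1 - (0 - p)) / 2 * Real.exp (-u)) :=
    mul_le_mul_of_nonneg_left hB (by linarith)
  have hc : p * ((1 + (1 - p)) / 2 * Real.exp u + (1 - (1 - p)) / 2 * Real.exp (-u))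
      + (1 - p) * ((1 + (0 - p)) / 2 * Real.exp u + (1 - (0 - p)) / 2 * Real.exp (-u))
      = Real.cosh u := by rw [Real.cosh_eq]; ring
  have hcosh := Real.cosh_le_exp_half_sq u
  linarith
lemma sum_pi_prod {ι β : Type*} [Fintype ι] [DecidableEq ι] [Fintype β] (G : ι → β → ℝ) :
    ∑ x : ι → β, ∏ i, G i (x i) = ∏ i, ∑ b, G i b :=
  (Fintype.prod_sum fun i b => G i b).symm
def bval (b : Bool) : ℝ := if b then 1 else 0
noncomputable def Ssum {n : ℕ} (p c : Fin n → Fin n → ℝ) (x : Fin n → Fin n → Bool) : ℝ :=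
  ∑ i : Fin n, ∑ j : Fin n, c i j * (bval (x i j) - p i j)

set_option maxHeartbeats 2000000 in
lemma mgf_bound {Q n : ℕ} {πs : Fin Q → Fin Q → ℝ} (hmat : MatIcc πs) (zs : Fin n → Fin Q)
    (c : Fin n → Fin n → ℝ) (hc0 : ∀ i, c i i = 0) (hc1 : ∀ i j, |c i j| ≤ 1) (t : ℝ) :
    ∑ x : Fin n → Fin n → Bool,
        bernW πs zs x * Real.exp (t * Ssum (fun i j => πs (zs i) (zs j)) c x)
      ≤ 2 ^ n * Real.exp (t ^ 2 / 2) ^ (n * n) := by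
  classical
  set p : Fin n → Fin n → ℝ := fun i j => πs (zs i) (zs j) with hp
  set g : Fin n → Fin n → Bool → ℝ := fun i j b =>
    (if i = j then 1 else if b then p i j else 1 - p i j)
      * Real.exp (t * (c i j * (bval b - p i j))) with hg
  have hgnn : ∀ i j b, 0 ≤ g i j b := by
    intro i j b
    refine mul_nonneg ?_ (Real.exp_pos _).le
    by_cases hij : i = j
    · simp [hij]
    · have h := hmat (zs i) (zs j)
      by_cases hb : b <;> simp [hij, hb] <;> [exact h.1; linarith [h.2]]
  have hrw : ∀ x : Fin n → Fin n → Bool,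
      bernW πs zs x * Real.exp (t * Ssum p c x) = ∏ i, ∏ j, g i j (x i j) := by
    intro x
    have he : Real.exp (t * Ssum p c x)
        = ∏ i, ∏ j, Real.exp (t * (c i j * (bval (x i j) - p i j))) := by
      rw [Ssum, Finset.mul_sum, Real.exp_sum]
      exact Finset.prod_congr rfl fun i _ => by rw [Finset.mul_sum, Real.exp_sum]
    rw [he]
    show (∏ i, ∏ j, _) * (∏ i, ∏ j, _) = _
    rw [← Finset.prod_mul_distrib]
    exact Finset.prod_congr rfl fun i _ => by rw [← Finset.prod_mul_distrib]
  set E : ℝ := Real.exp (t ^ 2 / 2) with hE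
  have hE1 : 1 ≤ E := Real.one_le_exp (by positivity)
  calc ∑ x : Fin n → Fin n → Bool, bernW πs zs x * Real.exp (t * Ssum p c x)
      = ∑ x : Fin n → Fin n → Bool, ∏ i, ∏ j, g i j (x i j) :=
        Finset.sum_congr rfl fun x _ => hrw x
    _ = ∏ i, ∑ u : Fin n → Bool, ∏ j, g i j (u j) := by
        rw [Finset.prod_univ_sum, Fintype.piFinset_univ]
    _ = ∏ i, ∏ j, ∑ b, g i j b := by
        refine Finset.prod_congr rfl fun i _ => ?_
        rw [Finset.prod_univ_sum, Fintype.piFinset_univ]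
    _ ≤ ∏ i, ∏ j, (if i = j then 2 else E) := by
        refine Finset.prod_le_prod (fun i _ => Finset.prod_nonneg fun j _ =>
          Finset.sum_nonneg fun b _ => hgnn i j b) fun i _ => ?_
        refine Finset.prod_le_prod (fun j _ => Finset.sum_nonneg fun b _ => hgnn i j b)
          fun j _ => ?_
        rw [Fintype.sum_bool]
        by_cases hij : i = j
        · simp [hg, hij, hc0 j]; norm_num
        · have h01 := hmat (zs i) (zs j)
          have key := bern_mgf (u := t * c i j) h01.1 h01.2
          have h2 : Real.exp ((t * c i j) ^ 2 / 2) ≤ E := by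
            rw [hE]
            apply Real.exp_le_exp.2
            have hcc : c i j ^ 2 ≤ 1 := by
              rcases abs_le.mp (hc1 i j) with ⟨hl, hr⟩; nlinarith
            nlinarith [sq_nonneg t]
          simp only [hg, hij, if_false, if_neg hij, bval]
          simp only [if_true]
          calc p i j * Real.exp (t * (c i j * ((if (true:Bool) then (1:ℝ) else 0) - p i j)))
                + (1 - p i j) * Real.exp (t * (c i j * ((if (false:Bool) then (1:ℝ) else 0) - p i j)))
              = p i j * Real.exp ((t * c i j) * (1 - p i j))
                + (1 - p i j) * Real.exp ((t * c i j) * (0 - p i j)) := by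
                norm_num [mul_assoc]
            _ ≤ Real.exp ((t * c i j) ^ 2 / 2) := key
            _ ≤ E := h2
    _ ≤ 2 ^ n * E ^ (n * n) := by
        have inner : ∀ i : Fin n, (∏ j, if i = j then (2:ℝ) else E) ≤ 2 * E ^ n := by
          intro i
          rw [← Finset.mul_prod_erase univ _ (Finset.mem_univ i), if_pos rfl]
          have hpe : (∏ j ∈ Finset.univ.erase i, if i = j then (2:ℝ) else E)
              = E ^ (Finset.univ.erase i).card := by
            rw [Finset.prod_congr rfl fun j hj =>
              if_neg (fun h => (Finset.ne_of_mem_erase hj) h.symm)]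
            exact Finset.prod_const E
          rw [hpe]
          have : (Finset.univ.erase i).card ≤ n := by
            simpa using (Finset.card_erase_of_mem (Finset.mem_univ i)).trans_le
              (by simp [Finset.card_univ])
          exact mul_le_mul_of_nonneg_left (pow_le_pow_right₀ hE1 this) (by norm_num)
        calc (∏ i : Fin n, ∏ j, if i = j then (2:ℝ) else E)
            ≤ ∏ _i : Fin n, (2 * E ^ n) := Finset.prod_le_prod (fun i _ =>
              Finset.prod_nonneg fun j _ => by by_cases h : i = j <;> simp [h] <;> linarith)
              fun i _ => inner i
          _ = 2 ^ n * E ^ (n * n) := by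
              rw [Finset.prod_const, Finset.card_univ, Fintype.card_fin, mul_pow, ← pow_mul]

lemma bernW_nonneg {Q n : ℕ} {πs : Fin Q → Fin Q → ℝ} (hmat : MatIcc πs)
    (zs : Fin n → Fin Q) (x : Fin n → Fin n → Bool) : 0 ≤ bernW πs zs x := by
  refine Finset.prod_nonneg fun i _ => Finset.prod_nonneg fun j _ => ?_
  by_cases hij : i = j
  · simp [hij, bernW]
  · have h := hmat (zs i) (zs j)
    by_cases hx : x i j <;> simp [hij, hx] <;> [exact h.1; linarith [h.2]]

lemma Ssum_neg {n : ℕ} (p c : Fin n → Fin n → ℝ) (x : Fin n → Fin n → Bool) :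
    Ssum p (fun i j => -(c i j)) x = -Ssum p c x := by
  simp [Ssum, ← Finset.sum_neg_distrib]

lemma tail_bound {Q n : ℕ} {πs : Fin Q → Fin Q → ℝ} (hmat : MatIcc πs) (zs : Fin n → Fin Q)
    (c : Fin n → Fin n → ℝ) (hc0 : ∀ i, c i i = 0) (hc1 : ∀ i j, |c i j| ≤ 1)
    (hn : 0 < n) {s : ℝ} (hs : 0 ≤ s) :
    (∑ x : Fin n → Fin n → Bool,
        if s ≤ Ssum (fun i j => πs (zs i) (zs j)) c x then bernW πs zs x else 0)
      ≤ 2 ^ n * Real.exp (-(s ^ 2) / (2 * ((n:ℝ) * (n:ℝ)))) := by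
  classical
  set p : Fin n → Fin n → ℝ := fun i j => πs (zs i) (zs j) with hp
  have hnn : (0:ℝ) < (n:ℝ) * (n:ℝ) := by
    have : (0:ℝ) < (n:ℝ) := by exact_mod_cast hn
    positivity
  set t : ℝ := s / ((n:ℝ) * (n:ℝ)) with htdef
  have ht : 0 ≤ t := div_nonneg hs hnn.le
  have step : ∀ x, (if s ≤ Ssum p c x then bernW πs zs x else 0)
      ≤ bernW πs zs x * Real.exp (t * Ssum p c x) * Real.exp (-(t * s)) := by
    intro x
    by_cases h : s ≤ Ssum p c x
    · rw [if_pos h, mul_assoc, ← Real.exp_add]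
      refine le_mul_of_one_le_right (bernW_nonneg hmat zs x) ?_
      exact Real.one_le_exp (by nlinarith)
    · rw [if_neg h]
      exact mul_nonneg (mul_nonneg (bernW_nonneg hmat zs x) (Real.exp_pos _).le)
        (Real.exp_pos _).le
  calc (∑ x : Fin n → Fin n → Bool, if s ≤ Ssum p c x then bernW πs zs x else 0)
      ≤ ∑ x : Fin n → Fin n → Bool,
          bernW πs zs x * Real.exp (t * Ssum p c x) * Real.exp (-(t * s)) :=
        Finset.sum_le_sum fun x _ => step x
    _ = (∑ x : Fin n → Fin n → Bool, bernW πs zs x * Real.exp (t * Ssum p c x))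
          * Real.exp (-(t * s)) := by rw [← Finset.sum_mul]
    _ ≤ (2 ^ n * Real.exp (t ^ 2 / 2) ^ (n * n)) * Real.exp (-(t * s)) :=
        mul_le_mul_of_nonneg_right (mgf_bound hmat zs c hc0 hc1 t) (Real.exp_pos _).le
    _ = 2 ^ n * Real.exp (((n * n : ℕ) : ℝ) * (t ^ 2 / 2) + -(t * s)) := by
        rw [← Real.exp_nat_mul, mul_assoc, ← Real.exp_add]
    _ = 2 ^ n * Real.exp (-(s ^ 2) / (2 * ((n:ℝ) * (n:ℝ)))) := by
        congr 1
        push_cast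
        rw [htdef]
        field_simp
        ring

lemma abs_tail {Q n : ℕ} {πs : Fin Q → Fin Q → ℝ} (hmat : MatIcc πs) (zs : Fin n → Fin Q)
    (c : Fin n → Fin n → ℝ) (hc0 : ∀ i, c i i = 0) (hc1 : ∀ i j, |c i j| ≤ 1)
    (hn : 0 < n) {s : ℝ} (hs : 0 ≤ s) :
    (∑ x : Fin n → Fin n → Bool,
        if s ≤ |Ssum (fun i j => πs (zs i) (zs j)) c x| then bernW πs zs x else 0)
      ≤ 2 * (2 ^ n * Real.exp (-(s ^ 2) / (2 * ((n:ℝ) * (n:ℝ))))) := by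
  classical
  set p : Fin n → Fin n → ℝ := fun i j => πs (zs i) (zs j) with hp
  have h1 := tail_bound hmat zs c hc0 hc1 hn hs
  have h2 := tail_bound hmat zs (fun i j => -(c i j)) (by simp [hc0])
    (fun i j => by simpa using hc1 i j) hn hs
  have hpt : ∀ x, (if s ≤ |Ssum p c x| then bernW πs zs x else 0)
      ≤ (if s ≤ Ssum p c x then bernW πs zs x else 0)
        + (if s ≤ Ssum p (fun i j => -(c i j)) x then bernW πs zs x else 0) := by
    intro x
    have hw := bernW_nonneg hmat zs x
    rw [Ssum_neg]
    by_cases h : s ≤ |Ssum p c x|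
    · rw [if_pos h]
      rcases le_abs.mp h with h' | h'
      · rw [if_pos h']
        exact le_add_of_nonneg_right (by split_ifs <;> simp [hw])
      · rw [if_pos h']
        exact le_add_of_nonneg_left (by split_ifs <;> simp [hw])
    · rw [if_neg h]
      have : (0:ℝ) ≤ (if s ≤ Ssum p c x then bernW πs zs x else 0) := by
        split_ifs <;> simp [hw]
      have h2' : (0:ℝ) ≤ (if s ≤ -Ssum p c x then bernW πs zs x else 0) := by
        split_ifs <;> simp [hw]
      linarith
  calc (∑ x : Fin n → Fin n → Bool, if s ≤ |Ssum p c x| then bernW πs zs x else 0)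
      ≤ ∑ x : Fin n → Fin n → Bool,
          ((if s ≤ Ssum p c x then bernW πs zs x else 0)
            + (if s ≤ Ssum p (fun i j => -(c i j)) x then bernW πs zs x else 0)) :=
        Finset.sum_le_sum fun x _ => hpt x
    _ = (∑ x : Fin n → Fin n → Bool, if s ≤ Ssum p c x then bernW πs zs x else 0)
        + ∑ x : Fin n → Fin n → Bool,
            if s ≤ Ssum p (fun i j => -(c i j)) x then bernW πs zs x else 0 :=
        Finset.sum_add_distrib
    _ ≤ 2 ^ n * Real.exp (-(s ^ 2) / (2 * ((n:ℝ) * (n:ℝ))))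
        + 2 ^ n * Real.exp (-(s ^ 2) / (2 * ((n:ℝ) * (n:ℝ)))) := add_le_add h1 h2
    _ = 2 * (2 ^ n * Real.exp (-(s ^ 2) / (2 * ((n:ℝ) * (n:ℝ))))) := by ring

lemma swap4 {Q n : ℕ} (f : Fin Q → Fin Q → Fin n → Fin n → ℝ) :
    ∑ q, ∑ l, ∑ i, ∑ j, f q l i j = ∑ i, ∑ j, ∑ q, ∑ l, f q l i j := by
  calc ∑ q, ∑ l, ∑ i, ∑ j, f q l i j
      = ∑ q, ∑ i, ∑ l, ∑ j, f q l i j :=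
        Finset.sum_congr rfl fun q _ => Finset.sum_comm
    _ = ∑ i, ∑ q, ∑ l, ∑ j, f q l i j := Finset.sum_comm
    _ = ∑ i, ∑ q, ∑ j, ∑ l, f q l i j :=
        Finset.sum_congr rfl fun i _ => Finset.sum_congr rfl fun q _ => Finset.sum_comm
    _ = ∑ i, ∑ j, ∑ q, ∑ l, f q l i j :=
        Finset.sum_congr rfl fun i _ => Finset.sum_comm

lemma decomp {Q n : ℕ} (πs : Fin Q → Fin Q → ℝ) (zs : Fin n → Fin Q)
    (x : Fin n → Fin n → Bool) (z : Fin n → Fin Q) (π : Fin Q → Fin Q → ℝ) :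
    L1 x z π - PhiL1 πs zs z π
      = ∑ q : Fin Q, ∑ l : Fin Q,
          (Real.log (π q l) - Real.log (1 - π q l))
            * Ssum (fun i j => πs (zs i) (zs j))
                (fun i j => if i ≠ j ∧ z i = q ∧ z j = l then 1 else 0) x := by
  classical
  have hrhs : (∑ q : Fin Q, ∑ l : Fin Q,
      (Real.log (π q l) - Real.log (1 - π q l))
        * Ssum (fun i j => πs (zs i) (zs j))
            (fun i j => if i ≠ j ∧ z i = q ∧ z j = l then 1 else 0) x)
      = ∑ i : Fin n, ∑ j : Fin n, (if i = j then 0 else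
          (bval (x i j) - πs (zs i) (zs j))
            * (Real.log (π (z i) (z j)) - Real.log (1 - π (z i) (z j)))) := by
    simp only [Ssum, Finset.mul_sum]
    rw [swap4]
    refine Finset.sum_congr rfl fun i _ => Finset.sum_congr rfl fun j _ => ?_
    by_cases hij : i = j
    · simp [hij]
    · simp only [if_neg hij, ne_eq, hij, not_false_eq_true, true_and]
      rw [Finset.sum_eq_single (z i)]
      · rw [Finset.sum_eq_single (z j)]
        · rw [if_pos ⟨rfl, rfl⟩, one_mul, if_neg not_false]; ring
        · intro b _ hb
          rw [if_neg (fun h => hb h.2.symm), zero_mul, mul_zero]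
        · intro h; exact absurd (Finset.mem_univ _) h
      · intro b _ hb
        refine Finset.sum_eq_zero fun l _ => ?_
        rw [if_neg (fun h => hb h.1.symm), zero_mul, mul_zero]
      · intro h; exact absurd (Finset.mem_univ _) h
  rw [hrhs, L1, PhiL1, ← Finset.sum_sub_distrib]
  refine Finset.sum_congr rfl fun i _ => ?_
  rw [← Finset.sum_sub_distrib]
  refine Finset.sum_congr rfl fun j _ => ?_
  by_cases hij : i = j
  · simp [hij]
  · by_cases hx : x i j <;> simp [hij, hx, bval] <;> ring

lemma G_bound {Q : ℕ} {π : Fin Q → Fin Q → ℝ} (hm : MatIcc π) {ζ : ℝ} (hζ : 0 < ζ)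
    (h2 : A2 ζ π) (q l : Fin Q) :
    |Real.log (π q l) - Real.log (1 - π q l)| ≤ 2 * |Real.log ζ| + 1 := by
  have ha := hm q l
  by_cases h0 : π q l = 0
  · simp [h0]
    positivity
  by_cases h1 : π q l = 1
  · simp [h1]
    positivity
  have hio : π q l ∈ Set.Ioo (0:ℝ) 1 :=
    ⟨lt_of_le_of_ne ha.1 (Ne.symm h0), lt_of_le_of_ne ha.2 h1⟩
  have hic := h2 q l hio
  have hζ1 : ζ < 1 := lt_of_le_of_lt hic.1 hio.2
  have habs : ∀ b : ℝ, ζ ≤ b → b < 1 → |Real.log b| ≤ |Real.log ζ| := by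
    intro b hb1 hb2
    rw [abs_of_nonpos (Real.log_nonpos (hζ.le.trans hb1) hb2.le),
      abs_of_nonpos (Real.log_nonpos hζ.le hζ1.le)]
    have := Real.log_le_log hζ hb1
    linarith
  have l1 := habs (π q l) hic.1 hio.2
  have l2 : |Real.log (1 - π q l)| ≤ |Real.log ζ| := by
    refine habs _ (by linarith [hic.2]) (by linarith [hio.1])
  calc |Real.log (π q l) - Real.log (1 - π q l)|
      ≤ |Real.log (π q l)| + |Real.log (1 - π q l)| := abs_sub _ _
    _ ≤ 2 * |Real.log ζ| + 1 := by linarith [abs_nonneg (Real.log ζ)]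

/-- coefficient matrix attached to a labelling and a pair of classes -/
noncomputable def cmat {Q n : ℕ} (y : (Fin n → Fin Q) × Fin Q × Fin Q) (i j : Fin n) : ℝ :=
  if i ≠ j ∧ y.1 i = y.2.1 ∧ y.1 j = y.2.2 then 1 else 0

lemma cmat_diag {Q n : ℕ} (y : (Fin n → Fin Q) × Fin Q × Fin Q) (i : Fin n) :
    cmat y i i = 0 := by simp [cmat]

lemma cmat_abs {Q n : ℕ} (y : (Fin n → Fin Q) × Fin Q × Fin Q) (i j : Fin n) :
    |cmat y i j| ≤ 1 := by unfold cmat; split_ifs <;> simp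

end SBMAux

set_option maxHeartbeats 4000000 in
/-- Uniform convergence in probability (uniformly in the true labels `z*`) of
`φ_n = L1/(n(n−1))` to its conditional expectation `Φ_n`, over the set `𝒫` of pairs
`(z, π)` with `π` satisfying (A1)–(A2) and such that whenever `π_{z_i,z_j} ∈ {0,1}`
it coincides with `π*_{z*_i,z*_j}`. -/
theorem uniform_convergence_phi
    (Q : ℕ) (hQ : 0 < Q) (πs : Fin Q → Fin Q → ℝ) (ζ : ℝ)
    (hmat : MatIcc πs) (hA1 : A1 πs) (hζ : 0 < ζ) (hA2 : A2 ζ πs) :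
    ∀ η : ℝ, 0 < η → ∀ ε : ℝ, 0 < ε → ∃ N : ℕ, ∀ n, N ≤ n → ∀ zs : Fin n → Fin Q,
      condProb πs zs {x | ∃ (z : Fin n → Fin Q) (π : Fin Q → Fin Q → ℝ),
        MatIcc π ∧ A1 π ∧ A2 ζ π ∧
        (∀ i j : Fin n, i ≠ j → (π (z i) (z j) = 0 ∨ π (z i) (z j) = 1) →
          πs (zs i) (zs j) = π (z i) (z j)) ∧
        η < |((n : ℝ) * ((n : ℝ) - 1))⁻¹ * L1 x z π
              - ((n : ℝ) * ((n : ℝ) - 1))⁻¹ * PhiL1 πs zs z π|}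
      ≤ ε := by
  intro η hη ε hε
  classical
  have hQ0 : (0:ℝ) < (Q:ℝ) := by exact_mod_cast hQ
  set M : ℝ := 2 * |Real.log ζ| + 1 with hM
  have hMpos : 0 < M := by positivity
  set K : ℝ := η / (M * (Q:ℝ) ^ 2) with hK
  have hKpos : 0 < K := div_pos hη (mul_pos hMpos (pow_pos hQ0 2))
  set cexp : ℝ := K ^ 2 / 2 with hcexp
  have hcpos : 0 < cexp := by positivity
  set Lg : ℝ := Real.log (2 * (Q:ℝ)) with hLg
  set C : ℝ := 2 * (Q:ℝ) ^ 2 with hC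
  have hCpos : 0 < C := by positivity
  set R1 : ℝ := 2 * (|Lg| + 1) / cexp + 2 with hR1
  set N : ℕ := max 2 (max ⌈R1⌉₊ ⌈|Real.log (ε / C)|⌉₊) with hN
  refine ⟨N, fun n hn zs => ?_⟩
  have hn2 : 2 ≤ n := le_trans (le_max_left _ _) hn
  have hnR : R1 ≤ (n:ℝ) := by
    have h1 : (⌈R1⌉₊ : ℝ) ≤ (n:ℝ) := by
      exact_mod_cast le_trans (le_trans (le_max_left _ _) (le_max_right 2 _)) hn
    exact le_trans (Nat.le_ceil R1) h1
  have hnE : |Real.log (ε / C)| ≤ (n:ℝ) := by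
    have h1 : (⌈|Real.log (ε / C)|⌉₊ : ℝ) ≤ (n:ℝ) := by
      exact_mod_cast le_trans (le_trans (le_max_right _ _) (le_max_right 2 _)) hn
    exact le_trans (Nat.le_ceil _) h1
  have hn1 : (2:ℝ) ≤ (n:ℝ) := by exact_mod_cast hn2
  set D : ℝ := (n:ℝ) * ((n:ℝ) - 1) with hD
  have hDpos : 0 < D := by rw [hD]; nlinarith
  set s : ℝ := K * D with hs
  have hspos : 0 < s := mul_pos hKpos hDpos
  set p : Fin n → Fin n → ℝ := fun i j => πs (zs i) (zs j) with hp
  set Eset : Set (Fin n → Fin n → Bool) := {x | ∃ (z : Fin n → Fin Q) (π : Fin Q → Fin Q → ℝ),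
        MatIcc π ∧ A1 π ∧ A2 ζ π ∧
        (∀ i j : Fin n, i ≠ j → (π (z i) (z j) = 0 ∨ π (z i) (z j) = 1) →
          πs (zs i) (zs j) = π (z i) (z j)) ∧
        η < |D⁻¹ * L1 x z π - D⁻¹ * PhiL1 πs zs z π|} with hEset
  -- Step 1: event inclusion into the union of deviation events
  have hincl : ∀ x : Fin n → Fin n → Bool, x ∈ Eset →
      ∃ y : (Fin n → Fin Q) × Fin Q × Fin Q, s ≤ |SBMAux.Ssum p (SBMAux.cmat y) x| := by
    rintro x ⟨z, π, hmp, -, h2p, -, habs⟩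
    have hD' : |D⁻¹ * L1 x z π - D⁻¹ * PhiL1 πs zs z π|
        = D⁻¹ * |L1 x z π - PhiL1 πs zs z π| := by
      rw [← mul_sub, abs_mul, abs_of_pos (inv_pos.mpr hDpos)]
    rw [hD'] at habs
    have h1 : η * D < (D⁻¹ * |L1 x z π - PhiL1 πs zs z π|) * D :=
      mul_lt_mul_of_pos_right habs hDpos
    have h2 : (D⁻¹ * |L1 x z π - PhiL1 πs zs z π|) * D
        = |L1 x z π - PhiL1 πs zs z π| := by field_simp
    rw [h2, SBMAux.decomp πs zs x z π] at h1
    by_contra hno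
    push_neg at hno
    haveI : Nonempty (Fin Q) := ⟨⟨0, hQ⟩⟩
    have t1 : |∑ q : Fin Q, ∑ l : Fin Q,
        (Real.log (π q l) - Real.log (1 - π q l))
          * SBMAux.Ssum p (fun i j => if i ≠ j ∧ z i = q ∧ z j = l then 1 else 0) x|
        ≤ ∑ q : Fin Q, ∑ l : Fin Q, |(Real.log (π q l) - Real.log (1 - π q l))
          * SBMAux.Ssum p (fun i j => if i ≠ j ∧ z i = q ∧ z j = l then 1 else 0) x| :=
      le_trans (Finset.abs_sum_le_sum_abs _ _)
        (Finset.sum_le_sum fun q _ => Finset.abs_sum_le_sum_abs _ _)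
    have t2 : ∀ q l : Fin Q, |(Real.log (π q l) - Real.log (1 - π q l))
        * SBMAux.Ssum p (fun i j => if i ≠ j ∧ z i = q ∧ z j = l then 1 else 0) x|
        < M * s := by
      intro q l
      rw [abs_mul]
      have hG := SBMAux.G_bound hmp hζ h2p q l
      have hlt : |SBMAux.Ssum p (fun i j => if i ≠ j ∧ z i = q ∧ z j = l then 1 else 0) x| < s := by
        have := hno (z, q, l)
        exact this
      calc |Real.log (π q l) - Real.log (1 - π q l)|
            * |SBMAux.Ssum p (fun i j => if i ≠ j ∧ z i = q ∧ z j = l then 1 else 0) x|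
          ≤ M * |SBMAux.Ssum p (fun i j => if i ≠ j ∧ z i = q ∧ z j = l then 1 else 0) x| :=
            mul_le_mul_of_nonneg_right hG (abs_nonneg _)
        _ < M * s := by exact mul_lt_mul_of_pos_left hlt hMpos
    have t3 : (∑ q : Fin Q, ∑ l : Fin Q, |(Real.log (π q l) - Real.log (1 - π q l))
        * SBMAux.Ssum p (fun i j => if i ≠ j ∧ z i = q ∧ z j = l then 1 else 0) x|)
        < ∑ _q : Fin Q, ∑ _l : Fin Q, M * s := by
      refine Finset.sum_lt_sum_of_nonempty Finset.univ_nonempty fun q _ =>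
        Finset.sum_lt_sum_of_nonempty Finset.univ_nonempty fun l _ => t2 q l
    have t4 : (∑ _q : Fin Q, ∑ _l : Fin Q, M * s) = (Q:ℝ) * ((Q:ℝ) * (M * s)) := by
      simp [Finset.sum_const, Finset.card_univ, nsmul_eq_mul]
    have t5 : (Q:ℝ) * ((Q:ℝ) * (M * s)) = η * D := by
      rw [hs, hK]; field_simp
    rw [t4, t5] at t3
    exact absurd (lt_trans h1 (lt_of_le_of_lt t1 t3)) (lt_irrefl _)
  -- Step 2: union bound
  have hw : ∀ x, 0 ≤ bernW πs zs x := SBMAux.bernW_nonneg hmat zs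
  have key : condProb πs zs Eset
      ≤ ∑ y : (Fin n → Fin Q) × Fin Q × Fin Q, ∑ x : Fin n → Fin n → Bool,
          (if s ≤ |SBMAux.Ssum p (SBMAux.cmat y) x| then bernW πs zs x else 0) := by
    rw [condProb, ← Finset.sum_comm]
    refine Finset.sum_le_sum fun x _ => ?_
    have hnn : ∀ y : (Fin n → Fin Q) × Fin Q × Fin Q,
        0 ≤ (if s ≤ |SBMAux.Ssum p (SBMAux.cmat y) x| then bernW πs zs x else 0) := by
      intro y; split_ifs <;> simp [hw x]
    by_cases hx : x ∈ Eset
    · obtain ⟨y0, hy0⟩ := hincl x hx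
      rw [if_pos hx]
      calc bernW πs zs x
          = (if s ≤ |SBMAux.Ssum p (SBMAux.cmat y0) x| then bernW πs zs x else 0) :=
            (if_pos hy0).symm
        _ ≤ ∑ y : (Fin n → Fin Q) × Fin Q × Fin Q,
              (if s ≤ |SBMAux.Ssum p (SBMAux.cmat y) x| then bernW πs zs x else 0) :=
            Finset.single_le_sum (fun y _ => hnn y) (Finset.mem_univ y0)
    · rw [if_neg hx]
      exact Finset.sum_nonneg fun y _ => hnn y
  -- Step 3: tail bound for each term
  set B : ℝ := 2 * (2 ^ n * Real.exp (-(s ^ 2) / (2 * ((n:ℝ) * (n:ℝ))))) with hB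
  have tail : ∀ y : (Fin n → Fin Q) × Fin Q × Fin Q,
      (∑ x : Fin n → Fin n → Bool,
        if s ≤ |SBMAux.Ssum p (SBMAux.cmat y) x| then bernW πs zs x else 0) ≤ B :=
    fun y => SBMAux.abs_tail hmat zs (SBMAux.cmat y) (SBMAux.cmat_diag y)
      (SBMAux.cmat_abs y) (by omega) hspos.le
  have card_eq : (Fintype.card ((Fin n → Fin Q) × Fin Q × Fin Q)) = Q ^ n * (Q * Q) := by
    simp [Fintype.card_prod, Fintype.card_fun]
  have step : condProb πs zs Eset ≤ ((Q ^ n * (Q * Q) : ℕ) : ℝ) * B := by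
    refine le_trans key (le_trans (Finset.sum_le_sum fun y _ => tail y) ?_)
    rw [Finset.sum_const, Finset.card_univ, card_eq, nsmul_eq_mul]
  -- Step 4: the numeric bound
  have hnne : (n:ℝ) ≠ 0 := by positivity
  have hexp : -(s ^ 2) / (2 * ((n:ℝ) * (n:ℝ))) = -(cexp * ((n:ℝ) - 1) ^ 2) := by
    rw [hs, hD, hcexp]; field_simp
  have h2Q : (0:ℝ) < 2 * (Q:ℝ) := by positivity
  have hA : ((Q ^ n * (Q * Q) : ℕ) : ℝ) * B
      = C * Real.exp ((n:ℝ) * Lg + -(cexp * ((n:ℝ) - 1) ^ 2)) := by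
    rw [hB, hexp, hC, hLg, Real.exp_add]
    have hpow : Real.exp ((n:ℝ) * Real.log (2 * (Q:ℝ))) = (2 * (Q:ℝ)) ^ n := by
      rw [Real.exp_nat_mul, Real.exp_log h2Q]
    rw [hpow, mul_pow]
    push_cast
    ring
  have hexp2 : (n:ℝ) * Lg + -(cexp * ((n:ℝ) - 1) ^ 2) ≤ -(n:ℝ) := by
    have hx2 : (2:ℝ) ≤ (n:ℝ) := hn1
    have hdiv : 0 ≤ 2 * (|Lg| + 1) / cexp :=
      div_nonneg (by positivity) hcpos.le
    have hstep : 2 * (|Lg| + 1) ≤ cexp * ((n:ℝ) - 2) := by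
      have h' : 2 * (|Lg| + 1) / cexp ≤ (n:ℝ) - 2 := by
        rw [hR1] at hnR; linarith
      calc 2 * (|Lg| + 1) = cexp * (2 * (|Lg| + 1) / cexp) := by field_simp
        _ ≤ cexp * ((n:ℝ) - 2) := mul_le_mul_of_nonneg_left h' hcpos.le
    have hLabs : Lg ≤ |Lg| := le_abs_self _
    have habs0 : 0 ≤ |Lg| := abs_nonneg _
    have e2 : (1:ℝ) ≤ (n:ℝ) - 1 := by linarith
    have e4 : ((n:ℝ) - 1) * (2 * (|Lg| + 1)) ≤ ((n:ℝ) - 1) * (cexp * ((n:ℝ) - 2)) :=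
      mul_le_mul_of_nonneg_left hstep (by linarith)
    have e5 : (n:ℝ) * (|Lg| + 1) ≤ ((n:ℝ) - 1) * (2 * (|Lg| + 1)) := by
      nlinarith [mul_nonneg (show (0:ℝ) ≤ (n:ℝ) - 2 by linarith)
        (show (0:ℝ) ≤ |Lg| + 1 by linarith)]
    have e6 : (n:ℝ) * Lg + (n:ℝ) ≤ (n:ℝ) * (|Lg| + 1) := by
      nlinarith [mul_nonneg (show (0:ℝ) ≤ (n:ℝ) by linarith) (sub_nonneg.mpr hLabs)]
    have e3 : cexp * (((n:ℝ) - 1) * ((n:ℝ) - 2)) ≤ cexp * (((n:ℝ) - 1) ^ 2) := by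
      nlinarith [mul_nonneg hcpos.le (show (0:ℝ) ≤ (n:ℝ) - 1 by linarith)]
    nlinarith [e2, e3, e4, e5, e6, hcpos.le]
  have hlogstep : -(n:ℝ) ≤ Real.log (ε / C) := by
    have := neg_abs_le (Real.log (ε / C))
    linarith
  calc condProb πs zs Eset ≤ ((Q ^ n * (Q * Q) : ℕ) : ℝ) * B := step
    _ = C * Real.exp ((n:ℝ) * Lg + -(cexp * ((n:ℝ) - 1) ^ 2)) := hA
    _ ≤ C * Real.exp (-(n:ℝ)) :=
        mul_le_mul_of_nonneg_left (Real.exp_le_exp.2 hexp2) hCpos.le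
    _ ≤ C * Real.exp (Real.log (ε / C)) :=
        mul_le_mul_of_nonneg_left (Real.exp_le_exp.2 hlogstep) hCpos.le
    _ = ε := by rw [Real.exp_log (div_pos hε hCpos)]; field_simp
end

section
/- Uniform asymptotic equivalence of the variational and maximum likelihood criteria: define M_n(α, π) = (n(n−1))^{−1} L2(X_{[n]}; α, π) and J_n(α, π) = (n(n−1))^{−1} 𝒥(X_{[n]}; τ̂_{[n]}(α,π), α, π), where τ̂_{[n]}(α,π) maximizes τ ↦ 𝒥(X_{[n]}; τ, α, π) over 𝒮_n. Then under (A2) and (A3), sup_{(α,π)} |J_n(α, π) − M_n(α, π)| = o(1), ℙ-almost surely (indeed deterministically, the supremum is at most 2 log(1/γ)/(n−1)), where the supremum is taken over parameters (α,π) fulfilling (A2) and (A3). -/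
open scoped Classical
open Finset Filter MeasureTheory
set_option maxHeartbeats 1000000

/-- SBM log-likelihood `L2(X; α, π) = log ( Σ_z exp(L1(X;z,π)) Π_i α_{z_i} )`. -/
noncomputable def L2 {Q n : ℕ} (x : Fin n → Fin n → Bool) (α : Fin Q → ℝ)
    (π : Fin Q → Fin Q → ℝ) : ℝ :=
  Real.log (∑ z : Fin n → Fin Q, Real.exp (L1 x z π) * ∏ i, α (z i))

/-- Membership of `τ` in `𝒮_n`: each row of `τ` is a probability vector. -/
def memS {Q n : ℕ} (τ : Fin n → Fin Q → ℝ) : Prop :=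
  (∀ i q, 0 ≤ τ i q) ∧ ∀ i, ∑ q, τ i q = 1

/-- The variational log-likelihood `𝒥(X; τ, α, π)`. -/
noncomputable def Jfun {Q n : ℕ} (x : Fin n → Fin n → Bool) (τ : Fin n → Fin Q → ℝ)
    (α : Fin Q → ℝ) (π : Fin Q → Fin Q → ℝ) : ℝ :=
  (∑ i : Fin n, ∑ j : Fin n, if i = j then 0 else
      ∑ q, ∑ l, (if x i j then Real.log (π q l) else Real.log (1 - π q l)) * τ i q * τ j l)
    - ∑ i, ∑ q, τ i q * (Real.log (τ i q) - Real.log (α q))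

section AuxVLG

lemma sum_prod_pi' {Q n : ℕ} (f : Fin n → Fin Q → ℝ) :
    ∑ z : Fin n → Fin Q, ∏ i, f i (z i) = ∏ i, ∑ q, f i q := by
  rw [Finset.prod_univ_sum, Fintype.piFinset_univ]

lemma marg1' {Q n : ℕ} (τ : Fin n → Fin Q → ℝ) (hτ1 : ∀ k, ∑ q, τ k q = 1)
    (i : Fin n) (f : Fin Q → ℝ) :
    ∑ z : Fin n → Fin Q, (∏ k, τ k (z k)) * f (z i) = ∑ q, τ i q * f q := by
  have h1 : ∀ z : Fin n → Fin Q,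
      (∏ k, τ k (z k)) * f (z i)
        = ∑ q, f q * ∏ k, (τ k (z k) * (if k = i then (if z k = q then 1 else 0) else 1)) := by
    intro z
    have h2 : ∀ q : Fin Q,
        (∏ k, (τ k (z k) * (if k = i then (if z k = q then 1 else 0) else 1)))
          = (∏ k, τ k (z k)) * (if z i = q then 1 else 0) := by
      intro q
      rw [Finset.prod_mul_distrib]
      congr 1
      simp
    rw [Finset.sum_congr rfl fun q _ => by rw [h2 q]]
    simp only [mul_ite, mul_one, mul_zero, Finset.sum_ite_eq, Finset.mem_univ, if_true]
    ring
  simp only [h1]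
  rw [Finset.sum_comm]
  refine Finset.sum_congr rfl fun q _ => ?_
  rw [← Finset.mul_sum,
    sum_prod_pi' (fun k m => τ k m * (if k = i then (if m = q then 1 else 0) else 1))]
  have h3 : ∀ k, (∑ m, τ k m * (if k = i then (if m = q then 1 else 0) else 1))
      = if k = i then τ i q else 1 := by
    intro k
    by_cases hk : k = i
    · subst hk; simp
    · simp [hk, hτ1 k]
  rw [Finset.prod_congr rfl fun k _ => h3 k]
  simp [mul_comm]

lemma marg2' {Q n : ℕ} (τ : Fin n → Fin Q → ℝ) (hτ1 : ∀ k, ∑ q, τ k q = 1)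
    {i j : Fin n} (hij : i ≠ j) (g : Fin Q → Fin Q → ℝ) :
    ∑ z : Fin n → Fin Q, (∏ k, τ k (z k)) * g (z i) (z j)
      = ∑ q, ∑ l, g q l * τ i q * τ j l := by
  have h1 : ∀ z : Fin n → Fin Q,
      (∏ k, τ k (z k)) * g (z i) (z j)
        = ∑ q, ∑ l, g q l * ∏ k, (τ k (z k) *
            ((if k = i then (if z k = q then 1 else 0) else 1) *
             (if k = j then (if z k = l then 1 else 0) else 1))) := by
    intro z
    have h2 : ∀ q l : Fin Q,
        (∏ k, (τ k (z k) *
            ((if k = i then (if z k = q then 1 else 0) else 1) *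
             (if k = j then (if z k = l then 1 else 0) else 1))))
          = (∏ k, τ k (z k)) * ((if z i = q then 1 else 0) * (if z j = l then 1 else 0)) := by
      intro q l
      rw [Finset.prod_mul_distrib]
      congr 1
      rw [Finset.prod_mul_distrib]
      congr 1 <;> simp
    rw [Finset.sum_congr rfl fun q _ => Finset.sum_congr rfl fun l _ => by rw [h2 q l]]
    simp only [mul_ite, mul_one, mul_zero, Finset.sum_ite_eq, Finset.mem_univ, if_true]
    ring
  simp only [h1]
  rw [Finset.sum_comm]
  refine Finset.sum_congr rfl fun q _ => ?_
  rw [Finset.sum_comm]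
  refine Finset.sum_congr rfl fun l _ => ?_
  rw [← Finset.mul_sum,
    sum_prod_pi' (fun k m => τ k m *
      ((if k = i then (if m = q then 1 else 0) else 1) *
       (if k = j then (if m = l then 1 else 0) else 1)))]
  have h3 : ∀ k, (∑ m, τ k m *
      ((if k = i then (if m = q then 1 else 0) else 1) *
       (if k = j then (if m = l then 1 else 0) else 1)))
      = if k = i then τ i q else if k = j then τ j l else 1 := by
    intro k
    by_cases hk : k = i
    · subst hk; simp [hij]
    · by_cases hk' : k = j
      · subst hk'; simp [hk]
      · simp [hk, hk', hτ1 k]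
  rw [Finset.prod_congr rfl fun k _ => h3 k]
  have h4 : (∏ k, if k = i then τ i q else if k = j then τ j l else 1) = τ i q * τ j l := by
    have h5 : ∀ k, (if k = i then τ i q else if k = j then τ j l else 1)
        = (if k = i then τ i q else 1) * (if k = j then τ j l else 1) := by
      intro k
      by_cases hk : k = i
      · subst hk; simp [hij]
      · by_cases hk' : k = j
        · subst hk'; simp [hij.symm]
        · simp [hk, hk']
    rw [Finset.prod_congr rfl fun k _ => h5 k, Finset.prod_mul_distrib]
    simp
  rw [h4]; ring

lemma gibbs' {ι : Type*} [Fintype ι] [Nonempty ι] (p a : ι → ℝ)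
    (hp0 : ∀ z, 0 ≤ p z) (hp1 : ∑ z, p z = 1) :
    ∑ z, p z * (a z - Real.log (p z)) ≤ Real.log (∑ z, Real.exp (a z)) := by
  set S := ∑ z, Real.exp (a z) with hS
  have hSpos : 0 < S := Finset.sum_pos (fun z _ => Real.exp_pos _) Finset.univ_nonempty
  have key : ∀ z, p z * (a z - Real.log (p z)) - p z * Real.log S
      ≤ Real.exp (a z) / S - p z := by
    intro z
    rcases eq_or_lt_of_le (hp0 z) with h0 | h0
    · rw [← h0]
      have h2 : (0:ℝ) ≤ Real.exp (a z) / S := by positivity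
      simpa using h2
    · have ht : 0 < Real.exp (a z) / (p z * S) := by positivity
      have hlog := Real.log_le_sub_one_of_pos ht
      have hlogeq : Real.log (Real.exp (a z) / (p z * S))
          = a z - Real.log (p z) - Real.log S := by
        rw [Real.log_div (Real.exp_pos _).ne' (by positivity),
          Real.log_mul h0.ne' hSpos.ne', Real.log_exp]
        ring
      rw [hlogeq] at hlog
      have h6 := mul_le_mul_of_nonneg_left hlog (hp0 z)
      calc p z * (a z - Real.log (p z)) - p z * Real.log S
          = p z * (a z - Real.log (p z) - Real.log S) := by ring
        _ ≤ p z * (Real.exp (a z) / (p z * S) - 1) := h6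
        _ = Real.exp (a z) / S - p z := by
            field_simp
  have hsum : ∑ z, (p z * (a z - Real.log (p z)) - p z * Real.log S)
      ≤ ∑ z, (Real.exp (a z) / S - p z) := Finset.sum_le_sum (fun z _ => key z)
  rw [Finset.sum_sub_distrib, Finset.sum_sub_distrib, ← Finset.sum_mul, hp1,
    ← Finset.sum_div, ← hS, div_self hSpos.ne'] at hsum
  linarith

/-- The variational criterion as an average over label configurations. -/
lemma Jfun_eq_sum {Q n : ℕ} (x : Fin n → Fin n → Bool) (τ : Fin n → Fin Q → ℝ)
    (α : Fin Q → ℝ) (π : Fin Q → Fin Q → ℝ) (hτ : memS τ) :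
    Jfun x τ α π = ∑ z : Fin n → Fin Q, (∏ i, τ i (z i)) *
      ((L1 x z π + ∑ i, Real.log (α (z i))) - Real.log (∏ i, τ i (z i))) := by
  obtain ⟨hτ0, hτ1⟩ := hτ
  have hA : ∑ z : Fin n → Fin Q, (∏ i, τ i (z i)) * L1 x z π
      = ∑ i : Fin n, ∑ j : Fin n, if i = j then 0 else
          ∑ q, ∑ l, (if x i j then Real.log (π q l) else Real.log (1 - π q l)) * τ i q * τ j l := by
    unfold L1
    rw [Finset.sum_congr rfl fun z _ => Finset.mul_sum (Finset.univ) _ _]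
    rw [Finset.sum_comm]
    refine Finset.sum_congr rfl fun i _ => ?_
    rw [Finset.sum_congr rfl fun z _ => Finset.mul_sum (Finset.univ) _ _]
    rw [Finset.sum_comm]
    refine Finset.sum_congr rfl fun j _ => ?_
    by_cases hij : i = j
    · simp [hij]
    · rw [if_neg hij]
      rw [Finset.sum_congr rfl fun z _ => by rw [if_neg hij]]
      exact marg2' τ hτ1 hij (fun q l => if x i j then Real.log (π q l) else Real.log (1 - π q l))
  have hB : ∑ z : Fin n → Fin Q, (∏ i, τ i (z i)) * (∑ i, Real.log (α (z i)))
      = ∑ i, ∑ q, τ i q * Real.log (α q) := by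
    rw [Finset.sum_congr rfl fun z _ => Finset.mul_sum (Finset.univ) _ _]
    rw [Finset.sum_comm]
    exact Finset.sum_congr rfl fun i _ => marg1' τ hτ1 i (fun q => Real.log (α q))
  have hC : ∑ z : Fin n → Fin Q, (∏ i, τ i (z i)) * Real.log (∏ i, τ i (z i))
      = ∑ i, ∑ q, τ i q * Real.log (τ i q) := by
    have hpt : ∀ z : Fin n → Fin Q, (∏ i, τ i (z i)) * Real.log (∏ i, τ i (z i))
        = (∏ i, τ i (z i)) * (∑ i, Real.log (τ i (z i))) := by
      intro z
      by_cases h : ∀ k : Fin n, τ k (z k) ≠ 0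
      · rw [Real.log_prod fun k _ => h k]
      · push_neg at h
        obtain ⟨k, hk⟩ := h
        rw [Finset.prod_eq_zero (Finset.mem_univ k) hk]
        ring
    rw [Finset.sum_congr rfl fun z _ => hpt z]
    rw [Finset.sum_congr rfl fun z _ => Finset.mul_sum (Finset.univ) _ _]
    rw [Finset.sum_comm]
    exact Finset.sum_congr rfl fun i _ => marg1' τ hτ1 i (fun q => Real.log (τ i q))
  have hsplit : ∑ z : Fin n → Fin Q, (∏ i, τ i (z i)) *
      ((L1 x z π + ∑ i, Real.log (α (z i))) - Real.log (∏ i, τ i (z i)))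
      = (∑ z : Fin n → Fin Q, (∏ i, τ i (z i)) * L1 x z π)
        + (∑ z : Fin n → Fin Q, (∏ i, τ i (z i)) * (∑ i, Real.log (α (z i))))
        - ∑ z : Fin n → Fin Q, (∏ i, τ i (z i)) * Real.log (∏ i, τ i (z i)) := by
    rw [← Finset.sum_add_distrib, ← Finset.sum_sub_distrib]
    exact Finset.sum_congr rfl fun z _ => by ring
  rw [hsplit, hA, hB, hC]
  unfold Jfun
  rw [Finset.sum_congr rfl fun i _ => Finset.sum_congr rfl fun q _ =>
    (mul_sub (τ i q) (Real.log (τ i q)) (Real.log (α q)) : _)]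
  rw [Finset.sum_congr rfl fun i (_ : i ∈ Finset.univ) =>
    Finset.sum_sub_distrib (f := fun q => τ i q * Real.log (τ i q))
      (g := fun q => τ i q * Real.log (α q))]
  rw [Finset.sum_sub_distrib]
  ring

/-- Value of the variational criterion at a point-mass `τ`. -/
lemma Jfun_indicator {Q n : ℕ} (x : Fin n → Fin n → Bool) (zs : Fin n → Fin Q)
    (α : Fin Q → ℝ) (π : Fin Q → Fin Q → ℝ) :
    Jfun x (fun i q => if q = zs i then 1 else 0) α π
      = L1 x zs π + ∑ i, Real.log (α (zs i)) := by
  unfold Jfun L1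
  have h1 : ∀ i j : Fin n, (if i = j then 0 else
      ∑ q, ∑ l, (if x i j then Real.log (π q l) else Real.log (1 - π q l)) *
        (if q = zs i then 1 else 0) * (if l = zs j then 1 else 0))
      = if i = j then 0 else
        (if x i j then Real.log (π (zs i) (zs j)) else Real.log (1 - π (zs i) (zs j))) := by
    intro i j
    by_cases hij : i = j
    · simp [hij]
    · rw [if_neg hij, if_neg hij]
      simp [mul_ite, ite_mul, mul_one, mul_zero, zero_mul, one_mul]
  have h2 : ∀ i : Fin n, ∑ q, (if q = zs i then (1:ℝ) else 0) *
      (Real.log (if q = zs i then (1:ℝ) else 0) - Real.log (α q))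
      = - Real.log (α (zs i)) := by
    intro i
    rw [Finset.sum_eq_single (zs i)]
    · simp
    · intro q _ hq
      simp [hq]
    · simp
  rw [Finset.sum_congr rfl fun i _ => Finset.sum_congr rfl fun j _ => h1 i j,
    Finset.sum_congr rfl fun i (_ : i ∈ Finset.univ) => h2 i]
  rw [Finset.sum_neg_distrib]
  ring

end AuxVLG

/-- Uniform asymptotic equivalence of the variational and maximum-likelihood criteria:
for every `n ≥ 2`, adjacency matrix `x`, parameters `(α, π)` satisfying (A2)–(A3) and
any maximizer `τ̂` of `τ ↦ 𝒥(x; τ, α, π)` over `𝒮_n`,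
`|J_n(α,π) − M_n(α,π)| ≤ 2 log(1/γ)/(n−1)`; in particular the supremum over such
`(α, π)` is `o(1)`. -/

theorem variational_likelihood_gap
    (Q : ℕ) (hQ : 0 < Q) (ζ γ : ℝ) (hζ : 0 < ζ) (hγ0 : 0 < γ) (hγQ : γ < 1 / Q) :
    (∀ n : ℕ, 2 ≤ n → ∀ (x : Fin n → Fin n → Bool) (α : Fin Q → ℝ)
        (π : Fin Q → Fin Q → ℝ),
      ProbVec α → A3 γ α → MatIcc π → A2 ζ π →
      ∀ τ : Fin n → Fin Q → ℝ, memS τ →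
        (∀ τ' : Fin n → Fin Q → ℝ, memS τ' → Jfun x τ' α π ≤ Jfun x τ α π) →
        |((n : ℝ) * ((n : ℝ) - 1))⁻¹ * Jfun x τ α π
            - ((n : ℝ) * ((n : ℝ) - 1))⁻¹ * L2 x α π|
          ≤ 2 * Real.log (1 / γ) / ((n : ℝ) - 1)) ∧
    (∀ ε : ℝ, 0 < ε → ∃ N : ℕ, ∀ n, N ≤ n →
      ∀ (x : Fin n → Fin n → Bool) (α : Fin Q → ℝ) (π : Fin Q → Fin Q → ℝ),
      ProbVec α → A3 γ α → MatIcc π → A2 ζ π →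
      ∀ τ : Fin n → Fin Q → ℝ, memS τ →
        (∀ τ' : Fin n → Fin Q → ℝ, memS τ' → Jfun x τ' α π ≤ Jfun x τ α π) →
        |((n : ℝ) * ((n : ℝ) - 1))⁻¹ * Jfun x τ α π
            - ((n : ℝ) * ((n : ℝ) - 1))⁻¹ * L2 x α π| ≤ ε) := by
  have hQ1 : (1:ℝ) ≤ (Q:ℝ) := by exact_mod_cast hQ
  have hQ0 : (0:ℝ) < (Q:ℝ) := by linarith
  have hγlt : (Q:ℝ) < 1/γ := by
    rw [lt_div_iff₀ hγ0]
    rw [lt_div_iff₀ (by exact_mod_cast hQ : (0:ℝ) < (Q:ℝ))] at hγQ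
    linarith
  have hlogγ0 : 0 ≤ Real.log (1/γ) := Real.log_nonneg (by linarith)
  have hlogQle : Real.log (Q:ℝ) ≤ 2 * Real.log (1/γ) := by
    have h1 : Real.log (Q:ℝ) ≤ Real.log (1/γ) := Real.log_le_log hQ0 hγlt.le
    linarith
  have key : ∀ n : ℕ, 2 ≤ n → ∀ (x : Fin n → Fin n → Bool) (α : Fin Q → ℝ)
      (π : Fin Q → Fin Q → ℝ),
      ProbVec α → A3 γ α → MatIcc π → A2 ζ π →
      ∀ τ : Fin n → Fin Q → ℝ, memS τ →
        (∀ τ' : Fin n → Fin Q → ℝ, memS τ' → Jfun x τ' α π ≤ Jfun x τ α π) →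
        |((n : ℝ) * ((n : ℝ) - 1))⁻¹ * Jfun x τ α π
            - ((n : ℝ) * ((n : ℝ) - 1))⁻¹ * L2 x α π|
          ≤ 2 * Real.log (1 / γ) / ((n : ℝ) - 1) := by
    intro n hn x α π hPV hA3 hM hA2 τ hτ hmax
    haveI : Nonempty (Fin Q) := ⟨⟨0, hQ⟩⟩
    have hαpos : ∀ q, 0 < α q := fun q => lt_of_lt_of_le hγ0 (hA3 q).1
    set a : (Fin n → Fin Q) → ℝ := fun z => L1 x z π + ∑ i, Real.log (α (z i)) with ha
    have hL2eq : L2 x α π = Real.log (∑ z : Fin n → Fin Q, Real.exp (a z)) := by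
      unfold L2
      congr 1
      refine Finset.sum_congr rfl fun z _ => ?_
      rw [ha]
      simp only []
      rw [Real.exp_add, Real.exp_sum]
      congr 1
      exact Finset.prod_congr rfl fun i _ => (Real.exp_log (hαpos _)).symm
    have hp0 : ∀ z : Fin n → Fin Q, 0 ≤ ∏ i, τ i (z i) :=
      fun z => Finset.prod_nonneg fun i _ => hτ.1 i (z i)
    have hp1 : ∑ z : Fin n → Fin Q, ∏ i, τ i (z i) = 1 := by
      rw [sum_prod_pi', Finset.prod_congr rfl fun i _ => hτ.2 i]
      simp
    have hJle : Jfun x τ α π ≤ L2 x α π := by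
      rw [Jfun_eq_sum x τ α π hτ, hL2eq]
      exact gibbs' (fun z => ∏ i, τ i (z i)) a hp0 hp1
    obtain ⟨zs, -, hzs⟩ := Finset.exists_max_image (Finset.univ : Finset (Fin n → Fin Q)) a
      ⟨fun _ => Classical.arbitrary _, Finset.mem_univ _⟩
    have hcard : (Fintype.card (Fin n → Fin Q) : ℝ) = (Q:ℝ)^n := by
      rw [Fintype.card_fun]
      simp
    have hsum_le : ∑ z : Fin n → Fin Q, Real.exp (a z) ≤ (Q:ℝ)^n * Real.exp (a zs) := by
      calc ∑ z : Fin n → Fin Q, Real.exp (a z) ≤ ∑ _z : Fin n → Fin Q, Real.exp (a zs) :=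
            Finset.sum_le_sum fun z _ => Real.exp_le_exp.mpr (hzs z (Finset.mem_univ z))
        _ = (Q:ℝ)^n * Real.exp (a zs) := by
            rw [Finset.sum_const, Finset.card_univ, nsmul_eq_mul, hcard]
    have hL2le : L2 x α π ≤ (n:ℝ) * Real.log (Q:ℝ) + a zs := by
      rw [hL2eq]
      have hpos : 0 < ∑ z : Fin n → Fin Q, Real.exp (a z) :=
        Finset.sum_pos (fun z _ => Real.exp_pos _) Finset.univ_nonempty
      calc Real.log (∑ z : Fin n → Fin Q, Real.exp (a z))
          ≤ Real.log ((Q:ℝ)^n * Real.exp (a zs)) := Real.log_le_log hpos hsum_le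
        _ = (n:ℝ) * Real.log (Q:ℝ) + a zs := by
            rw [Real.log_mul (by positivity) (Real.exp_pos _).ne', Real.log_pow, Real.log_exp]
    have hmemind : memS (fun i q => if q = zs i then (1:ℝ) else 0) := by
      constructor
      · intro i q; by_cases h : q = zs i <;> simp [h]
      · intro i; simp
    have hJge : a zs ≤ Jfun x τ α π := by
      have h := hmax _ hmemind
      rwa [Jfun_indicator x zs α π] at h
    have hn2 : (2:ℝ) ≤ (n:ℝ) := by exact_mod_cast hn
    have hd : (0:ℝ) < (n:ℝ) - 1 := by linarith
    have hnn : (0:ℝ) < (n:ℝ) * ((n:ℝ) - 1) := by nlinarith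
    have hc : (0:ℝ) ≤ ((n:ℝ) * ((n:ℝ) - 1))⁻¹ := by positivity
    have hgap : L2 x α π - Jfun x τ α π ≤ (n:ℝ) * Real.log (Q:ℝ) := by linarith
    have h1 : ((n:ℝ) * ((n:ℝ) - 1))⁻¹ * Jfun x τ α π
        ≤ ((n:ℝ) * ((n:ℝ) - 1))⁻¹ * L2 x α π := mul_le_mul_of_nonneg_left hJle hc
    rw [abs_of_nonpos (by linarith)]
    have h3 : ((n:ℝ) * ((n:ℝ) - 1))⁻¹ * (L2 x α π - Jfun x τ α π)
        ≤ ((n:ℝ) * ((n:ℝ) - 1))⁻¹ * ((n:ℝ) * Real.log (Q:ℝ)) :=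
      mul_le_mul_of_nonneg_left hgap hc
    have h4 : ((n:ℝ) * ((n:ℝ) - 1))⁻¹ * ((n:ℝ) * Real.log (Q:ℝ))
        = Real.log (Q:ℝ) / ((n:ℝ) - 1) := by
      field_simp
    have h5 : Real.log (Q:ℝ) / ((n:ℝ) - 1) ≤ 2 * Real.log (1/γ) / ((n:ℝ) - 1) :=
      (div_le_div_iff_of_pos_right hd).mpr hlogQle
    calc -(((n:ℝ) * ((n:ℝ) - 1))⁻¹ * Jfun x τ α π - ((n:ℝ) * ((n:ℝ) - 1))⁻¹ * L2 x α π)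
        = ((n:ℝ) * ((n:ℝ) - 1))⁻¹ * (L2 x α π - Jfun x τ α π) := by ring
      _ ≤ ((n:ℝ) * ((n:ℝ) - 1))⁻¹ * ((n:ℝ) * Real.log (Q:ℝ)) := h3
      _ = Real.log (Q:ℝ) / ((n:ℝ) - 1) := h4
      _ ≤ 2 * Real.log (1/γ) / ((n:ℝ) - 1) := h5
  refine ⟨key, ?_⟩
  intro ε hε
  refine ⟨⌈2 * Real.log (1/γ) / ε⌉₊ + 2, fun n hn x α π hPV hA3 hM hA2 τ hτ hmax => ?_⟩
  have hn2 : 2 ≤ n := le_trans (Nat.le_add_left 2 _) hn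
  have hb := key n hn2 x α π hPV hA3 hM hA2 τ hτ hmax
  refine hb.trans ?_
  have hn2' : (2:ℝ) ≤ (n:ℝ) := by exact_mod_cast hn2
  have hd : (0:ℝ) < (n:ℝ) - 1 := by linarith
  rw [div_le_iff₀ hd]
  have hceil : 2 * Real.log (1/γ) / ε ≤ (⌈2 * Real.log (1/γ) / ε⌉₊ : ℝ) := Nat.le_ceil _
  have hcast : ((⌈2 * Real.log (1/γ) / ε⌉₊ : ℝ) + 2) ≤ (n:ℝ) := by exact_mod_cast hn
  have h6 : 2 * Real.log (1/γ) / ε ≤ (n:ℝ) - 1 := by linarith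
  calc 2 * Real.log (1/γ) = (2 * Real.log (1/γ) / ε) * ε := by field_simp
    _ ≤ ((n:ℝ) - 1) * ε := mul_le_mul_of_nonneg_right h6 hε.le
    _ = ε * ((n:ℝ) - 1) := mul_comm _ _
end

section
/- Uniform gap bounds between the likelihood, variational, and profile criteria: assume (A3), i.e. there is 0 < γ < 1 with α_q ≥ γ for all q. For every adjacency matrix X_{[n]}, every such α and every Q×Q matrix π with entries in [0,1], letting ẑ_{[n]} = ẑ_{[n]}(π) maximize z ↦ L1(X_{[n]}; z, π) and τ̂_{[n]} maximize τ ↦ 𝒥(X_{[n]}; τ, α, π) over 𝒮_n, one has |L2(X_{[n]}; α, π) − L1(X_{[n]}; ẑ_{[n]}, π)| ≤ n log(1/γ) and |𝒥(X_{[n]}; τ̂_{[n]}, α, π) − L1(X_{[n]}; ẑ_{[n]}, π)| ≤ n log(1/γ). -/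
open scoped Classical
open Finset




lemma gibbs'_s17 {Q : ℕ} (τ α : Fin Q → ℝ) (hτ : ∀ q, 0 ≤ τ q) (hτs : ∑ q, τ q = 1)
    (hαs : ∑ q, α q = 1) (hαpos : ∀ q, 0 < α q) :
    0 ≤ ∑ q, τ q * (Real.log (τ q) - Real.log (α q)) := by
  have key : ∀ q, τ q - α q ≤ τ q * (Real.log (τ q) - Real.log (α q)) := by
    intro q
    rcases eq_or_lt_of_le (hτ q) with h | h
    · simp [← h]
      exact (hαpos q).le
    · have hlog : Real.log (α q / τ q) ≤ α q / τ q - 1 :=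
        Real.log_le_sub_one_of_pos (div_pos (hαpos q) h)
      rw [Real.log_div (hαpos q).ne' h.ne'] at hlog
      have h2 := mul_le_mul_of_nonneg_left hlog (hτ q)
      have h3 : τ q * (α q / τ q) = α q := mul_div_cancel₀ _ h.ne'
      nlinarith [h2, h3]
  calc (0:ℝ) = ∑ q, (τ q - α q) := by rw [Finset.sum_sub_distrib, hτs, hαs]; ring
  _ ≤ _ := Finset.sum_le_sum fun q _ => key q

lemma sum_prod_weights {Q n : ℕ} (w : Fin n → Fin Q → ℝ) :
    ∑ z : Fin n → Fin Q, ∏ k, w k (z k) = ∏ k, ∑ q, w k q := by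
  rw [Finset.prod_univ_sum]
  simp [Fintype.piFinset_univ]

lemma marginal {Q n : ℕ} (τ : Fin n → Fin Q → ℝ) (hrow : ∀ k, ∑ q, τ k q = 1)
    (i j : Fin n) (hij : i ≠ j) (F : Fin Q → Fin Q → ℝ) :
    ∑ z : Fin n → Fin Q, (∏ k, τ k (z k)) * F (z i) (z j)
      = ∑ q, ∑ l, F q l * τ i q * τ j l := by
  set g : Fin Q → Fin Q → Fin n → Fin Q → ℝ := fun q l k m =>
    if k = i then (if m = q then τ i m else 0)
    else if k = j then (if m = l then τ j m else 0) else τ k m with hg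
  have expand : ∀ z : Fin n → Fin Q, (∏ k, τ k (z k)) * F (z i) (z j)
      = ∑ q, ∑ l, F q l * ∏ k, g q l k (z k) := by
    intro z
    rw [Finset.sum_eq_single (z i), Finset.sum_eq_single (z j)]
    · rw [mul_comm]
      congr 1
      apply Finset.prod_congr rfl
      intro k _
      by_cases hki : k = i
      · subst hki; simp [hg]
      · by_cases hkj : k = j
        · subst hkj; simp [hg, hij.symm]
        · simp [hg, hki, hkj]
    · intro l _ hl
      have : g (z i) l j (z j) = 0 := by
        simp only [hg, if_neg hij.symm, if_pos rfl, ite_eq_right_iff, if_true]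
        intro h; exact absurd h.symm hl
      rw [Finset.prod_eq_zero (Finset.mem_univ j) this, mul_zero]
    · intro h; exact absurd (Finset.mem_univ _) h
    · intro q _ hq
      have : ∀ l, g q l i (z i) = 0 := by
        intro l
        simp only [hg, if_pos rfl, ite_eq_right_iff]
        intro h; exact absurd h.symm hq
      have hz : ∀ l, (∏ k, g q l k (z k)) = 0 := fun l =>
        Finset.prod_eq_zero (Finset.mem_univ i) (this l)
      simp [hz]
    · intro h; exact absurd (Finset.mem_univ _) h
  rw [Finset.sum_congr rfl fun z _ => expand z]
  rw [Finset.sum_comm]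
  have swap : ∀ q : Fin Q, ∑ z : Fin n → Fin Q, ∑ l, F q l * ∏ k, g q l k (z k)
      = ∑ l, ∑ z : Fin n → Fin Q, F q l * ∏ k, g q l k (z k) := fun q => Finset.sum_comm
  rw [Finset.sum_congr rfl fun q _ => swap q]
  apply Finset.sum_congr rfl; intro q _
  apply Finset.sum_congr rfl; intro l _
  have hfact : ∑ z : Fin n → Fin Q, ∏ k, g q l k (z k) = ∏ k, ∑ m, g q l k m := by
    rw [Finset.prod_univ_sum]
    simp [Fintype.piFinset_univ]
  have hcol : ∀ k, (∑ m, g q l k m) = (if k = i then τ i q else 1) * (if k = j then τ j l else 1) := by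
    intro k
    by_cases hki : k = i
    · subst hki
      simp [hg, hij, Finset.sum_ite_eq']
    · by_cases hkj : k = j
      · subst hkj
        simp [hg, hki, Finset.sum_ite_eq']
      · simp [hg, hki, hkj, hrow k]
  have hS : ∑ z : Fin n → Fin Q, ∏ k, g q l k (z k) = τ i q * τ j l := by
    rw [hfact, Finset.prod_congr rfl fun k _ => hcol k, Finset.prod_mul_distrib]
    simp [Finset.prod_ite_eq']
  rw [← Finset.mul_sum, hS]
  ring

section Main
variable {Q n : ℕ}

lemma L1_as_sum (x : Fin n → Fin n → Bool) (π : Fin Q → Fin Q → ℝ)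
    (τ : Fin n → Fin Q → ℝ) (hrow : ∀ k, ∑ q, τ k q = 1) :
    ∑ z : Fin n → Fin Q, (∏ k, τ k (z k)) * L1 x z π
      = ∑ i : Fin n, ∑ j : Fin n, if i = j then 0 else
          ∑ q, ∑ l, (if x i j then Real.log (π q l) else Real.log (1 - π q l)) * τ i q * τ j l := by
  unfold L1
  simp_rw [Finset.mul_sum]
  rw [Finset.sum_comm]
  refine Finset.sum_congr rfl fun i _ => ?_
  rw [Finset.sum_comm]
  refine Finset.sum_congr rfl fun j _ => ?_
  by_cases hij : i = j
  · simp [hij]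
  · simp only [if_neg hij]
    exact marginal τ hrow i j hij (fun q l => if x i j then Real.log (π q l) else Real.log (1 - π q l))

end Main


/-- Uniform gap bounds between the likelihood, variational, and profile criteria: if all
group proportions satisfy `α_q ≥ γ` (assumption (A3)), then both `|L2 − L1(ẑ)|` and
`|𝒥(τ̂) − L1(ẑ)|` are at most `n log(1/γ)`, where `ẑ` maximizes `z ↦ L1(X; z, π)` and
`τ̂` maximizes `τ ↦ 𝒥(X; τ, α, π)` over `𝒮_n`. -/
theorem likelihood_gap_bounds
    (Q n : ℕ) (hQ : 0 < Q) (γ : ℝ) (hγ0 : 0 < γ) (hγ1 : γ < 1)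
    (x : Fin n → Fin n → Bool) (α : Fin Q → ℝ) (π : Fin Q → Fin Q → ℝ)
    (hα : ∀ q, 0 ≤ α q) (hαsum : ∑ q, α q = 1)
    (hA3 : ∀ q, γ ≤ α q)
    (hπ : ∀ q l, π q l ∈ Set.Icc (0:ℝ) 1)
    (zh : Fin n → Fin Q) (hzh : ∀ z : Fin n → Fin Q, L1 x z π ≤ L1 x zh π)
    (τh : Fin n → Fin Q → ℝ) (hτh : memS τh)
    (hτmax : ∀ τ : Fin n → Fin Q → ℝ, memS τ → Jfun x τ α π ≤ Jfun x τh α π) :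
    |L2 x α π - L1 x zh π| ≤ n * Real.log (1 / γ) ∧
    |Jfun x τh α π - L1 x zh π| ≤ n * Real.log (1 / γ) := by
  have hαpos : ∀ q, 0 < α q := fun q => lt_of_lt_of_le hγ0 (hA3 q)
  set M := L1 x zh π with hM
  have hlogγ : Real.log (1 / γ) = -Real.log γ := by rw [one_div, Real.log_inv]
  have hlogγ0 : 0 ≤ Real.log (1 / γ) := by
    apply Real.log_nonneg
    rw [le_div_iff₀ hγ0]; linarith
  have hnlog : (0:ℝ) ≤ n * Real.log (1 / γ) :=
    mul_nonneg (Nat.cast_nonneg n) hlogγ0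
  -- Sum of products of α rows equals 1
  have hsum1 : ∑ z : Fin n → Fin Q, ∏ i, α (z i) = 1 := by
    rw [sum_prod_weights (fun _ q => α q)]
    simp [hαsum]
  -- γ^n lower bound on any product of α's
  have hprodγ : ∀ z : Fin n → Fin Q, γ ^ n ≤ ∏ i, α (z i) := by
    intro z
    calc γ ^ n = ∏ _i : Fin n, γ := by simp
    _ ≤ ∏ i, α (z i) := Finset.prod_le_prod (fun _ _ => hγ0.le) (fun i _ => hA3 (z i))
  have hprodnn : ∀ z : Fin n → Fin Q, 0 ≤ ∏ i, α (z i) := fun z =>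
    Finset.prod_nonneg fun i _ => hα (z i)
  set S := ∑ z : Fin n → Fin Q, Real.exp (L1 x z π) * ∏ i, α (z i) with hS
  have hSle : S ≤ Real.exp M := by
    calc S ≤ ∑ z : Fin n → Fin Q, Real.exp M * ∏ i, α (z i) :=
      Finset.sum_le_sum fun z _ =>
        mul_le_mul_of_nonneg_right (Real.exp_le_exp.2 (hzh z)) (hprodnn z)
    _ = Real.exp M := by rw [← Finset.mul_sum, hsum1, mul_one]
  have hSge : Real.exp M * γ ^ n ≤ S := by
    calc Real.exp M * γ ^ n ≤ Real.exp M * ∏ i, α (zh i) :=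
      mul_le_mul_of_nonneg_left (hprodγ zh) (Real.exp_pos M).le
    _ ≤ S := Finset.single_le_sum (f := fun z : Fin n → Fin Q => Real.exp (L1 x z π) * ∏ i, α (z i))
        (fun z _ => mul_nonneg (Real.exp_pos _).le (hprodnn z)) (Finset.mem_univ zh)
  have hSpos : 0 < S := lt_of_lt_of_le (mul_pos (Real.exp_pos M) (pow_pos hγ0 n)) hSge
  have hL2le : L2 x α π ≤ M := by
    have := Real.log_le_log hSpos hSle
    rwa [Real.log_exp] at this
  have hL2ge : M - n * Real.log (1 / γ) ≤ L2 x α π := by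
    have h1 := Real.log_le_log (mul_pos (Real.exp_pos M) (pow_pos hγ0 n)) hSge
    rw [Real.log_mul (Real.exp_pos M).ne' (pow_pos hγ0 n).ne', Real.log_exp,
      Real.log_pow] at h1
    rw [hlogγ]
    calc M - n * -Real.log γ = M + n * Real.log γ := by ring
    _ ≤ L2 x α π := h1
  -- J upper bound
  obtain ⟨hτnn, hτrow⟩ := hτh
  have hJle : Jfun x τh α π ≤ M := by
    have hB : 0 ≤ ∑ i, ∑ q, τh i q * (Real.log (τh i q) - Real.log (α q)) :=
      Finset.sum_nonneg fun i _ => gibbs'_s17 (τh i) α (hτnn i) (hτrow i) hαsum hαpos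
    have hwnn : ∀ z : Fin n → Fin Q, 0 ≤ ∏ k, τh k (z k) := fun z =>
      Finset.prod_nonneg fun k _ => hτnn k (z k)
    have hw1 : ∑ z : Fin n → Fin Q, ∏ k, τh k (z k) = 1 := by
      rw [sum_prod_weights]
      simp [hτrow]
    have hA : (∑ i : Fin n, ∑ j : Fin n, if i = j then 0 else
          ∑ q, ∑ l, (if x i j then Real.log (π q l) else Real.log (1 - π q l)) * τh i q * τh j l)
        ≤ M := by
      rw [← L1_as_sum x π τh hτrow]
      calc ∑ z : Fin n → Fin Q, (∏ k, τh k (z k)) * L1 x z π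
          ≤ ∑ z : Fin n → Fin Q, (∏ k, τh k (z k)) * M :=
        Finset.sum_le_sum fun z _ => mul_le_mul_of_nonneg_left (hzh z) (hwnn z)
      _ = M := by rw [← Finset.sum_mul, hw1, one_mul]
    unfold Jfun
    linarith
  -- J lower bound via indicator
  set τ0 : Fin n → Fin Q → ℝ := fun i q => if q = zh i then 1 else 0 with hτ0
  have hτ0mem : memS τ0 := by
    constructor
    · intro i q; by_cases h : q = zh i <;> simp [hτ0, h]
    · intro i; simp [hτ0, Finset.sum_ite_eq']
  have hJ0 : Jfun x τ0 α π = M + ∑ i, Real.log (α (zh i)) := by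
    have hA0 : (∑ i : Fin n, ∑ j : Fin n, if i = j then 0 else
          ∑ q, ∑ l, (if x i j then Real.log (π q l) else Real.log (1 - π q l)) * τ0 i q * τ0 j l)
        = L1 x zh π := by
      unfold L1
      refine Finset.sum_congr rfl fun i _ => Finset.sum_congr rfl fun j _ => ?_
      by_cases hij : i = j
      · simp [hij]
      · simp only [if_neg hij, hτ0]
        rw [Finset.sum_eq_single (zh i)]
        · rw [Finset.sum_eq_single (zh j)]
          · simp
          · intro l _ hl; simp [hl]
          · simp
        · intro q _ hq; simp [hq]
        · simp
    have hB0 : (∑ i, ∑ q, τ0 i q * (Real.log (τ0 i q) - Real.log (α q)))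
        = -∑ i, Real.log (α (zh i)) := by
      have hrow : ∀ i, ∑ q, τ0 i q * (Real.log (τ0 i q) - Real.log (α q))
          = -(Real.log (α (zh i))) := by
        intro i
        rw [Finset.sum_eq_single (zh i)]
        · simp [hτ0]
        · intro q _ hq; simp [hτ0, hq]
        · simp
      rw [Finset.sum_congr rfl fun i _ => hrow i]
      simp
    unfold Jfun
    rw [hA0, hB0, hM]
    ring
  have hJge : M - n * Real.log (1 / γ) ≤ Jfun x τh α π := by
    have h1 : ∑ i : Fin n, Real.log γ ≤ ∑ i, Real.log (α (zh i)) :=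
      Finset.sum_le_sum fun i _ => Real.log_le_log hγ0 (hA3 (zh i))
    have h2 := hτmax τ0 hτ0mem
    rw [hJ0] at h2
    simp only [Finset.sum_const, Finset.card_univ, Fintype.card_fin, nsmul_eq_mul] at h1
    rw [hlogγ]
    linarith
  constructor
  · rw [abs_le]; constructor <;> [linarith; linarith]
  · rw [abs_le]; constructor <;> [linarith; linarith]
end

section
/- Accuracy of the KL-optimal product approximation at a point: let P̃ be a probability distribution on {1,…,Q}^n, let z* ∈ {1,…,Q}^n with P̃(z*) > 0, and let D ∈ 𝒟_n be any distribution minimizing the Kullback–Leibler divergence K(·, P̃) over the family 𝒟_n of product multinomial distributions on {1,…,Q}^n. Then |D(z*) − P̃(z*)| ≤ √( −(1/2) log P̃(z*) ). -/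
open scoped Classical
open Finset

/-- The product distribution `D_τ(z) = Π_i τ_{i,z_i}` on `{1,…,Q}^n`. -/
noncomputable def Dprod {Q n : ℕ} (τ : Fin n → Fin Q → ℝ) (z : Fin n → Fin Q) : ℝ :=
  ∏ i, τ i (z i)

/-- Kullback–Leibler divergence `K(D, P) = Σ_z D(z) log(D(z)/P(z))` between two
distributions on `{1,…,Q}^n`, with values in `EReal` (`+∞` if `D` is not absolutely
continuous with respect to `P`, and the convention `0 log 0 = 0`). -/
noncomputable def klDivF {Q n : ℕ} (D P : (Fin n → Fin Q) → ℝ) : EReal :=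
  ∑ z : Fin n → Fin Q,
    if D z = 0 then (0 : EReal)
    else if P z = 0 then (⊤ : EReal)
    else ((D z * Real.log (D z / P z) : ℝ) : EReal)

section PinskerAux

lemma ereal_sum_ne_bot {α : Type*} (s : Finset α) (f : α → EReal)
    (h : ∀ a ∈ s, f a ≠ ⊥) : ∑ x ∈ s, f x ≠ ⊥ := by
  induction s using Finset.cons_induction with
  | empty => simp
  | cons a s ha ih =>
    rw [Finset.sum_cons]
    rw [Ne, EReal.add_eq_bot_iff]
    push_neg
    exact ⟨h a (Finset.mem_cons_self a s), ih fun b hb => h b (Finset.mem_cons_of_mem hb)⟩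

lemma ereal_sum_eq_top {α : Type*} (s : Finset α) (f : α → EReal)
    (h : ∀ a ∈ s, f a ≠ ⊥) {a : α} (ha : a ∈ s) (hta : f a = ⊤) : ∑ x ∈ s, f x = ⊤ := by
  rw [← Finset.add_sum_erase s f ha, hta]
  exact EReal.top_add_of_ne_bot (ereal_sum_ne_bot _ _ fun b hb => h b (Finset.mem_of_mem_erase hb))

lemma ereal_coe_sum {α : Type*} (s : Finset α) (f : α → ℝ) :
    ((∑ x ∈ s, f x : ℝ) : EReal) = ∑ x ∈ s, (f x : EReal) :=
  map_sum (⟨⟨Real.toEReal, EReal.coe_zero⟩, EReal.coe_add⟩ : ℝ →+ EReal) f s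

lemma log_sum_ineq {α : Type*} (s : Finset α) (a b : α → ℝ)
    (ha : ∀ z ∈ s, 0 ≤ a z) (hb : ∀ z ∈ s, 0 < b z) (hB : 0 < ∑ z ∈ s, b z) :
    (∑ z ∈ s, a z) * Real.log ((∑ z ∈ s, a z) / (∑ z ∈ s, b z))
      ≤ ∑ z ∈ s, a z * Real.log (a z / b z) := by
  set A := ∑ z ∈ s, a z with hA
  set B := ∑ z ∈ s, b z with hBdef
  have key := Real.convexOn_mul_log.map_centerMass_le
    (t := s) (w := b) (p := fun z => a z / b z)
    (fun i hi => (hb i hi).le) hB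
    (fun i hi => Set.mem_Ici.2 (div_nonneg (ha i hi) (hb i hi).le))
  have hcm : s.centerMass b (fun z => a z / b z) = A / B := by
    rw [Finset.centerMass]
    rw [smul_eq_mul]
    rw [div_eq_inv_mul]
    congr 1
    rw [hA]
    apply Finset.sum_congr rfl
    intro z hz
    rw [smul_eq_mul, mul_div_cancel₀ _ (hb z hz).ne']
  rw [hcm] at key
  have hrhs : s.centerMass b ((fun x => x * Real.log x) ∘ fun z => a z / b z)
      = B⁻¹ * ∑ z ∈ s, a z * Real.log (a z / b z) := by
    rw [Finset.centerMass]
    rw [smul_eq_mul]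
    congr 1
    apply Finset.sum_congr rfl
    intro z hz
    simp only [Function.comp, smul_eq_mul]
    have hbz := (hb z hz).ne'
    field_simp
  rw [hrhs] at key
  have := mul_le_mul_of_nonneg_left key hB.le
  calc A * Real.log (A / B) = B * (A / B * Real.log (A / B)) := by
        field_simp
    _ ≤ B * (B⁻¹ * ∑ z ∈ s, a z * Real.log (a z / b z)) := this
    _ = ∑ z ∈ s, a z * Real.log (a z / b z) := by field_simp

noncomputable def Gfun (x : ℝ) : ℝ := Real.log x - Real.log (1 - x) - 4 * x

lemma Gfun_hasDeriv {x : ℝ} (hx : x ∈ Set.Ioo (0:ℝ) 1) :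
    HasDerivAt Gfun (x⁻¹ + (1 - x)⁻¹ - 4) x := by
  have h1 : HasDerivAt Real.log x⁻¹ x := Real.hasDerivAt_log hx.1.ne'
  have h2 : HasDerivAt (fun y : ℝ => 1 - y) (-1) x := by
    simpa using (hasDerivAt_id x).const_sub 1
  have hne : (1:ℝ) - x ≠ 0 := sub_ne_zero.2 (by exact fun h => absurd h.symm hx.2.ne)
  have h3 : HasDerivAt (fun y : ℝ => Real.log (1 - y)) ((1 - x)⁻¹ * (-1)) x :=
    (Real.hasDerivAt_log hne).comp x h2
  have h4 : HasDerivAt (fun y : ℝ => 4 * y) 4 x := by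
    simpa using (hasDerivAt_id x).const_mul 4
  have := (h1.sub h3).sub h4
  exact this.congr_deriv (by ring)

lemma Gfun_mono : MonotoneOn Gfun (Set.Ioo (0:ℝ) 1) := by
  apply monotoneOn_of_deriv_nonneg (convex_Ioo 0 1)
  · intro x hx
    exact (Gfun_hasDeriv hx).differentiableAt.continuousAt.continuousWithinAt
  · intro x hx
    rw [interior_Ioo] at hx
    exact (Gfun_hasDeriv hx).differentiableAt.differentiableWithinAt
  · intro x hx
    rw [interior_Ioo] at hx
    rw [(Gfun_hasDeriv hx).deriv]
    have h0 : 0 < x := hx.1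
    have h1 : 0 < 1 - x := by linarith [hx.2]
    have hxx : x * x⁻¹ = 1 := mul_inv_cancel₀ h0.ne'
    have hyy : (1 - x) * (1 - x)⁻¹ = 1 := mul_inv_cancel₀ h1.ne'
    have hp : 0 < x * (1 - x) := mul_pos h0 h1
    nlinarith [sq_nonneg (x - 1/2), sq_nonneg (x⁻¹ - (1-x)⁻¹), mul_pos (inv_pos.2 h0) (inv_pos.2 h1)]

noncomputable def Ffun (p x : ℝ) : ℝ :=
  x * Real.log x - x * Real.log p + ((1 - x) * Real.log (1 - x) - (1 - x) * Real.log (1 - p))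
    - 2 * (x - p) ^ 2

lemma Ffun_continuous (p : ℝ) : Continuous (Ffun p) := by
  have c1 : Continuous fun x : ℝ => x * Real.log x := Real.continuous_mul_log
  have c2 : Continuous fun x : ℝ => (1 - x) * Real.log (1 - x) :=
    c1.comp (continuous_const.sub continuous_id)
  unfold Ffun
  fun_prop

lemma Ffun_hasDeriv (p : ℝ) {x : ℝ} (hx : x ∈ Set.Ioo (0:ℝ) 1) :
    HasDerivAt (Ffun p) (Gfun x + (-Real.log p + Real.log (1 - p) + 4 * p)) x := by
  have hne : (1:ℝ) - x ≠ 0 := sub_ne_zero.2 (fun h => absurd h.symm hx.2.ne)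
  have h1 : HasDerivAt (fun y : ℝ => y * Real.log y) (Real.log x + 1) x :=
    Real.hasDerivAt_mul_log hx.1.ne'
  have h2 : HasDerivAt (fun y : ℝ => y * Real.log p) (Real.log p) x := by
    simpa using (hasDerivAt_id x).mul_const (Real.log p)
  have hsub : HasDerivAt (fun y : ℝ => 1 - y) (-1) x := by
    simpa using (hasDerivAt_id x).const_sub 1
  have h3 : HasDerivAt (fun y : ℝ => (1 - y) * Real.log (1 - y))
      ((Real.log (1 - x) + 1) * (-1)) x :=
    (Real.hasDerivAt_mul_log hne).comp x hsub
  have h4 : HasDerivAt (fun y : ℝ => (1 - y) * Real.log (1 - p)) (-1 * Real.log (1 - p)) x :=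
    hsub.mul_const (Real.log (1 - p))
  have h5 : HasDerivAt (fun y : ℝ => 2 * (y - p) ^ 2) (2 * (2 * (x - p))) x := by
    have : HasDerivAt (fun y : ℝ => (y - p) ^ 2) (2 * (x - p)) x := by
      exact (((hasDerivAt_id x).sub_const p).pow 2).congr_deriv (by simp)
    simpa using this.const_mul 2
  have := ((h1.sub h2).add (h3.sub h4)).sub h5
  exact this.congr_deriv (by unfold Gfun; ring)

lemma Ffun_self (p : ℝ) : Ffun p p = 0 := by unfold Ffun; ring

lemma Ffun_nonneg {p d : ℝ} (hp0 : 0 < p) (hp1 : p < 1) (hd0 : 0 ≤ d) (hd1 : d ≤ 1) :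
    0 ≤ Ffun p d := by
  have hGC : Gfun p + (-Real.log p + Real.log (1 - p) + 4 * p) = 0 := by unfold Gfun; ring
  have hpIoo : p ∈ Set.Ioo (0:ℝ) 1 := ⟨hp0, hp1⟩
  rcases le_total d p with hdp | hpd
  · have hanti : AntitoneOn (Ffun p) (Set.Icc 0 p) := by
      apply antitoneOn_of_deriv_nonpos (convex_Icc 0 p) (Ffun_continuous p).continuousOn
      · intro x hx
        rw [interior_Icc] at hx
        have hx1 : x ∈ Set.Ioo (0:ℝ) 1 := ⟨hx.1, lt_trans hx.2 hp1⟩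
        exact (Ffun_hasDeriv p hx1).differentiableAt.differentiableWithinAt
      · intro x hx
        rw [interior_Icc] at hx
        have hx1 : x ∈ Set.Ioo (0:ℝ) 1 := ⟨hx.1, lt_trans hx.2 hp1⟩
        rw [(Ffun_hasDeriv p hx1).deriv]
        have := Gfun_mono hx1 hpIoo hx.2.le
        linarith
    have := hanti ⟨hd0, hdp⟩ ⟨hp0.le, le_refl p⟩ hdp
    rwa [Ffun_self] at this
  · have hmono : MonotoneOn (Ffun p) (Set.Icc p 1) := by
      apply monotoneOn_of_deriv_nonneg (convex_Icc p 1) (Ffun_continuous p).continuousOn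
      · intro x hx
        rw [interior_Icc] at hx
        have hx1 : x ∈ Set.Ioo (0:ℝ) 1 := ⟨lt_trans hp0 hx.1, hx.2⟩
        exact (Ffun_hasDeriv p hx1).differentiableAt.differentiableWithinAt
      · intro x hx
        rw [interior_Icc] at hx
        have hx1 : x ∈ Set.Ioo (0:ℝ) 1 := ⟨lt_trans hp0 hx.1, hx.2⟩
        rw [(Ffun_hasDeriv p hx1).deriv]
        have := Gfun_mono hpIoo hx1 hx.1.le
        linarith
    have := hmono ⟨le_refl p, hp1.le⟩ ⟨hpd, hd1⟩ hpd
    rwa [Ffun_self] at this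

lemma mul_log_div_eq {x c : ℝ} (hx : 0 ≤ x) (hc : c ≠ 0) :
    x * Real.log (x / c) = x * Real.log x - x * Real.log c := by
  rcases eq_or_lt_of_le hx with h | h
  · simp [← h]
  · rw [Real.log_div h.ne' hc]; ring

lemma pinsker_bin {p d : ℝ} (hp0 : 0 < p) (hp1 : p < 1) (hd0 : 0 ≤ d) (hd1 : d ≤ 1) :
    2 * (d - p) ^ 2 ≤ d * Real.log (d / p) + (1 - d) * Real.log ((1 - d) / (1 - p)) := by
  have h1 := mul_log_div_eq hd0 hp0.ne'
  have h2 := mul_log_div_eq (by linarith : (0:ℝ) ≤ 1 - d) (by intro h; linarith [sub_eq_zero.1 h] : (1:ℝ) - p ≠ 0)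
  have h3 := Ffun_nonneg hp0 hp1 hd0 hd1
  unfold Ffun at h3
  linarith

end PinskerAux

/-- Accuracy of the KL-optimal product approximation at a point: if `D_τ` minimizes the
Kullback–Leibler divergence to a probability distribution `P̃` on `{1,…,Q}^n` over the
family of product multinomial distributions, then for any point `z*` with `P̃(z*) > 0`,
`|D_τ(z*) − P̃(z*)| ≤ √(−(1/2) log P̃(z*))`. -/
theorem kl_optimal_product_pointwise
    (Q n : ℕ) (P : (Fin n → Fin Q) → ℝ)
    (hP0 : ∀ z, 0 ≤ P z) (hPsum : ∑ z, P z = 1)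
    (zs : Fin n → Fin Q) (hzs : 0 < P zs)
    (τ : Fin n → Fin Q → ℝ) (hτ : memS τ)
    (hmin : ∀ τ' : Fin n → Fin Q → ℝ, memS τ' →
      klDivF (Dprod τ) P ≤ klDivF (Dprod τ') P) :
    |Dprod τ zs - P zs| ≤ Real.sqrt (-(1 / 2) * Real.log (P zs)) := by
  classical
  have hD0 : ∀ z, 0 ≤ Dprod τ z := fun z => Finset.prod_nonneg fun i _ => hτ.1 i (z i)
  have hDsum : ∑ z : Fin n → Fin Q, Dprod τ z = 1 := by
    unfold Dprod
    have h := Finset.prod_univ_sum (fun _ : Fin n => (Finset.univ : Finset (Fin Q)))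
      (fun i q => τ i q)
    rw [Fintype.piFinset_univ] at h
    rw [← h]
    simp [hτ.2]
  -- the Dirac point mass at zs
  set τδ : Fin n → Fin Q → ℝ := fun i q => if q = zs i then 1 else 0 with hτδdef
  have hmemδ : memS τδ := by
    constructor
    · intro i q; dsimp only [τδ]; split <;> norm_num
    · intro i; simp [τδ]
  have hDδ : ∀ z, Dprod τδ z = if z = zs then 1 else 0 := by
    intro z
    unfold Dprod
    by_cases h : z = zs
    · subst h; simp [τδ]
    · rw [if_neg h]
      obtain ⟨i, hi⟩ : ∃ i, z i ≠ zs i := by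
        by_contra hc; push_neg at hc; exact h (funext hc)
      exact Finset.prod_eq_zero (Finset.mem_univ i) (by simp [τδ, hi])
  have hKδ : klDivF (Dprod τδ) P = ((-Real.log (P zs) : ℝ) : EReal) := by
    unfold klDivF
    rw [Finset.sum_eq_single zs]
    · rw [hDδ zs, if_pos rfl, if_neg one_ne_zero, if_neg hzs.ne']
      norm_num [Real.log_inv]
    · intro z _ hz; rw [hDδ z, if_neg hz, if_pos rfl]
    · intro h; exact absurd (Finset.mem_univ zs) h
  have hKle : klDivF (Dprod τ) P ≤ ((-Real.log (P zs) : ℝ) : EReal) :=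
    hKδ ▸ hmin τδ hmemδ
  -- absolute continuity
  have habs : ∀ z, Dprod τ z ≠ 0 → P z ≠ 0 := by
    intro z hDz hPz
    have htop : klDivF (Dprod τ) P = ⊤ := by
      unfold klDivF
      refine ereal_sum_eq_top _ _ ?_ (Finset.mem_univ z) ?_
      · intro a _
        split_ifs
        · simp
        · simp
        · exact EReal.coe_ne_bot _
      · rw [if_neg hDz, if_pos hPz]
    rw [htop] at hKle
    exact absurd hKle (by simp)
  -- reduce to a real sum
  set g : (Fin n → Fin Q) → ℝ := fun z => Dprod τ z * Real.log (Dprod τ z / P z) with hgdef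
  have hKreal : klDivF (Dprod τ) P = ((∑ z, g z : ℝ) : EReal) := by
    unfold klDivF
    rw [ereal_coe_sum]
    apply Finset.sum_congr rfl
    intro z _
    by_cases h : Dprod τ z = 0
    · rw [if_pos h]; simp [hgdef, h]
    · rw [if_neg h, if_neg (habs z h)]
  have hsum_le : ∑ z, g z ≤ -Real.log (P zs) := by
    rw [hKreal] at hKle
    exact_mod_cast hKle
  have hd1 : Dprod τ zs ≤ 1 :=
    hDsum ▸ Finset.single_le_sum (fun z _ => hD0 z) (Finset.mem_univ zs)
  have hp1 : P zs ≤ 1 :=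
    hPsum ▸ Finset.single_le_sum (fun z _ => hP0 z) (Finset.mem_univ zs)
  have hPsplit := Finset.add_sum_erase Finset.univ P (Finset.mem_univ zs)
  have hDsplit := Finset.add_sum_erase Finset.univ (Dprod τ) (Finset.mem_univ zs)
  have hgsplit := Finset.add_sum_erase Finset.univ g (Finset.mem_univ zs)
  rcases eq_or_lt_of_le hp1 with hpeq | hplt
  · -- P zs = 1 : then D = P = dirac at zs
    have hrest : ∑ z ∈ Finset.univ.erase zs, P z = 0 := by
      rw [hPsum] at hPsplit; linarith [hPsplit]
    have hPz : ∀ z ∈ Finset.univ.erase zs, P z = 0 :=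
      (Finset.sum_eq_zero_iff_of_nonneg fun z _ => hP0 z).1 hrest
    have hDz : ∀ z ∈ Finset.univ.erase zs, Dprod τ z = 0 := fun z hz => by
      by_contra hc; exact habs z hc (hPz z hz)
    have hdeq : Dprod τ zs = 1 := by
      rw [hDsum, Finset.sum_eq_zero hDz] at hDsplit
      linarith
    rw [hdeq, ← hpeq]
    simp
  · -- P zs < 1 : Jensen + Pinsker
    set s := (Finset.univ.erase zs).filter (fun z => P z ≠ 0) with hsdef
    have hfP : ∀ z ∈ Finset.univ.erase zs, P z ≠ 0 → P z ≠ 0 := fun _ _ h => h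
    have hfD : ∀ z ∈ Finset.univ.erase zs, Dprod τ z ≠ 0 → P z ≠ 0 := fun z _ => habs z
    have hfg : ∀ z ∈ Finset.univ.erase zs, g z ≠ 0 → P z ≠ 0 := by
      intro z _ hgz hPz
      apply hgz
      have hDz : Dprod τ z = 0 := by by_contra hc; exact habs z hc hPz
      simp [hgdef, hDz]
    have hBsum : ∑ z ∈ s, P z = 1 - P zs := by
      rw [hsdef, Finset.sum_filter_of_ne hfP]
      rw [hPsum] at hPsplit; linarith
    have hAsum : ∑ z ∈ s, Dprod τ z = 1 - Dprod τ zs := by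
      rw [hsdef, Finset.sum_filter_of_ne hfD]
      rw [hDsum] at hDsplit; linarith
    have hgsum : ∑ z ∈ s, g z = ∑ z ∈ Finset.univ.erase zs, g z := by
      rw [hsdef, Finset.sum_filter_of_ne hfg]
    have hjensen := log_sum_ineq s (Dprod τ) P (fun z _ => hD0 z)
      (fun z hz => lt_of_le_of_ne (hP0 z) (Ne.symm (Finset.mem_filter.1 hz).2))
      (by rw [hBsum]; linarith)
    rw [hAsum, hBsum] at hjensen
    have hjensen' : (1 - Dprod τ zs) * Real.log ((1 - Dprod τ zs) / (1 - P zs))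
        ≤ ∑ z ∈ Finset.univ.erase zs, g z := by
      calc (1 - Dprod τ zs) * Real.log ((1 - Dprod τ zs) / (1 - P zs))
          ≤ ∑ z ∈ s, g z := hjensen
        _ = _ := hgsum
    have hpin := pinsker_bin hzs hplt (hD0 zs) hd1
    have hgzs : g zs = Dprod τ zs * Real.log (Dprod τ zs / P zs) := rfl
    have hfinal : 2 * (Dprod τ zs - P zs) ^ 2 ≤ -Real.log (P zs) := by
      have h1 : g zs + ∑ z ∈ Finset.univ.erase zs, g z ≤ -Real.log (P zs) := by
        rw [hgsplit]; exact hsum_le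
      linarith [hjensen', hpin, h1, hgzs.ge]
    have h2 : (Dprod τ zs - P zs) ^ 2 ≤ -(1 / 2) * Real.log (P zs) := by linarith
    calc |Dprod τ zs - P zs| = Real.sqrt ((Dprod τ zs - P zs) ^ 2) :=
          (Real.sqrt_sq_eq_abs _).symm
      _ ≤ Real.sqrt (-(1 / 2) * Real.log (P zs)) := Real.sqrt_le_sqrt h2
end
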